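/- arXiv:0903.1426 — 3 statements merged into one kernel-verified Lean document; each statement's English description precedes it below -/
import Mathlib

section
/- Let (X,d) be a compact metric space and T : X → X a homeomorphism which is expansive, i.e. there exists ε > 0 such that for all x ≠ y in X there is n ∈ ℤ with d(T^n x, T^n y) > ε. Then for every x ∈ X the homoclinic class 𝔗(x) = {y ∈ X : lim_{|n|→∞} d(T^n x, T^n y) = 0} is at most countable. -/
open Filter Metric

private lemma aux_finite_of_separated {X : Type*} [MetricSpace X] [CompactSpace X]
    {S : Set X} {δ : ℝ} (hδ : 0 < δ)
    (h : ∀ y ∈ S, ∀ z ∈ S, dist y z < δ → y = z) : S.Finite := by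
  classical
  obtain ⟨t, -, htf, hcov⟩ :=
    finite_cover_balls_of_compact (isCompact_univ (X := X)) (half_pos hδ)
  by_contra hS
  have hS' : S.Infinite := hS
  set f : X → X := fun y =>
    if hy : ∃ c ∈ t, y ∈ ball c (δ / 2) then hy.choose else y with hf
  have hmaps : Set.MapsTo f S t := by
    intro y _
    have hy : ∃ c ∈ t, y ∈ ball c (δ / 2) := by
      have := hcov (Set.mem_univ y)
      simpa using this
    simp only [hf, dif_pos hy]
    exact hy.choose_spec.1
  have hdist : ∀ y : X, y ∈ S → dist y (f y) < δ / 2 := by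
    intro y _
    have hy : ∃ c ∈ t, y ∈ ball c (δ / 2) := by
      have := hcov (Set.mem_univ y)
      simpa using this
    simp only [hf, dif_pos hy]
    have := hy.choose_spec.2
    rwa [mem_ball] at this
  obtain ⟨y, hy, z, hz, hne, heq⟩ := hS'.exists_ne_map_eq_of_mapsTo hmaps htf
  apply hne
  apply h y hy z hz
  calc dist y z ≤ dist y (f y) + dist (f z) z := by
        rw [heq]; exact dist_triangle _ _ _
    _ < δ / 2 + δ / 2 := by
        have := hdist z hz
        rw [dist_comm (f z) z]
        exact add_lt_add (hdist y hy) this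
    _ = δ := by ring

theorem homoclinic_class_countable_of_expansive
    {X : Type*} [MetricSpace X] [CompactSpace X] (T : X ≃ₜ X)
    (hexp : ∃ ε > (0 : ℝ), ∀ x y : X, x ≠ y →
      ∃ n : ℤ, ε < dist ((T.toEquiv ^ n) x) ((T.toEquiv ^ n) y))
    (x : X) :
    Set.Countable {y : X |
      Filter.Tendsto (fun n : ℤ => dist ((T.toEquiv ^ n) x) ((T.toEquiv ^ n) y))
        Filter.cofinite (nhds 0)} := by
  classical
  obtain ⟨ε, hε, hexp⟩ := hexp
  -- continuity of all iterates
  have hcont : ∀ n : ℤ, Continuous fun y : X => (T.toEquiv ^ n) y := by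
    intro n
    induction n using Int.induction_on with
    | zero => simpa using continuous_id'
    | succ k ih =>
      have h : (fun y : X => (T.toEquiv ^ ((k : ℤ) + 1)) y)
          = fun y : X => (T.toEquiv ^ (k : ℤ)) (T y) := by
        funext y; rw [zpow_add_one]; rfl
      rw [h]; exact ih.comp T.continuous
    | pred k ih =>
      have h : (fun y : X => (T.toEquiv ^ (-(k : ℤ) - 1)) y)
          = fun y : X => (T.toEquiv ^ (-(k : ℤ))) (T.symm y) := by
        funext y; rw [zpow_sub_one]; rfl
      rw [h]; exact ih.comp T.symm.continuous
  -- uniform continuity on finite index sets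
  have hunif : ∀ s : Finset ℤ, ∃ δ > (0 : ℝ), ∀ y z : X, dist y z < δ →
      ∀ n ∈ s, dist ((T.toEquiv ^ n) y) ((T.toEquiv ^ n) z) < ε := by
    intro s
    induction s using Finset.induction_on with
    | empty => exact ⟨1, one_pos, fun y z _ n hn => absurd hn (by simp)⟩
    | @insert a s hns ih =>
      obtain ⟨δ₁, hδ₁, h₁⟩ := ih
      have huc : UniformContinuous fun y : X => (T.toEquiv ^ a) y :=
        CompactSpace.uniformContinuous_of_continuous (hcont a)
      obtain ⟨δ₂, hδ₂, h₂⟩ := Metric.uniformContinuous_iff.mp huc ε hε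
      refine ⟨min δ₁ δ₂, lt_min hδ₁ hδ₂, fun y z hyz n hn => ?_⟩
      rcases Finset.mem_insert.mp hn with rfl | hn
      · exact h₂ (hyz.trans_le (min_le_right _ _))
      · exact h₁ y z (hyz.trans_le (min_le_left _ _)) n hn
  -- the pieces
  set S : ℕ → Set X := fun N =>
    {y : X | ∀ n : ℤ, (N : ℤ) ≤ |n| →
      dist ((T.toEquiv ^ n) x) ((T.toEquiv ^ n) y) ≤ ε / 2} with hS
  -- each piece is finite
  have hfin : ∀ N : ℕ, (S N).Finite := by
    intro N
    obtain ⟨δ, hδ, hδ'⟩ := hunif (Finset.Icc (-(N : ℤ)) N)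
    refine aux_finite_of_separated hδ fun y hy z hz hyz => ?_
    by_contra hne
    obtain ⟨n, hn⟩ := hexp y z hne
    by_cases hmem : n ∈ Finset.Icc (-(N : ℤ)) N
    · exact absurd (hδ' y z hyz n hmem) (not_lt.mpr hn.le)
    · have habs : (N : ℤ) ≤ |n| := by
        rw [Finset.mem_Icc, not_and_or, not_le, not_le] at hmem
        rcases hmem with hmem | hmem
        · calc (N : ℤ) ≤ -n := by omega
            _ ≤ |n| := by rw [← abs_neg]; exact le_abs_self _
        · exact le_trans hmem.le (le_abs_self n)
      have h1 := hy n habs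
      have h2 := hz n habs
      have : dist ((T.toEquiv ^ n) y) ((T.toEquiv ^ n) z) ≤ ε := by
        calc dist ((T.toEquiv ^ n) y) ((T.toEquiv ^ n) z)
            ≤ dist ((T.toEquiv ^ n) y) ((T.toEquiv ^ n) x)
              + dist ((T.toEquiv ^ n) x) ((T.toEquiv ^ n) z) := dist_triangle _ _ _
          _ ≤ ε / 2 + ε / 2 := by
              rw [dist_comm ((T.toEquiv ^ n) y)]
              exact add_le_add h1 h2
          _ = ε := by ring
      exact absurd hn (not_lt.mpr this)
  -- the homoclinic class is covered by the pieces
  have hsub : {y : X |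
      Filter.Tendsto (fun n : ℤ => dist ((T.toEquiv ^ n) x) ((T.toEquiv ^ n) y))
        Filter.cofinite (nhds 0)} ⊆ ⋃ N : ℕ, S N := by
    intro y hy
    have hB : {n : ℤ |
        ¬ dist ((T.toEquiv ^ n) x) ((T.toEquiv ^ n) y) < ε / 2}.Finite := by
      have := hy (Metric.ball_mem_nhds (0 : ℝ) (half_pos hε))
      rw [Filter.mem_map, Filter.mem_cofinite] at this
      refine this.subset fun n hn => ?_
      simpa [Real.dist_eq, abs_of_nonneg dist_nonneg] using hn
    obtain ⟨N, hN⟩ := (hB.image Int.natAbs).bddAbove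
    refine Set.mem_iUnion.mpr ⟨N + 1, fun n hn => ?_⟩
    have hnB : n ∉ {n : ℤ |
        ¬ dist ((T.toEquiv ^ n) x) ((T.toEquiv ^ n) y) < ε / 2} := by
      intro hmem
      have : n.natAbs ≤ N := hN (Set.mem_image_of_mem _ hmem)
      have : |n| ≤ (N : ℤ) := by
        rw [Int.abs_eq_natAbs]; exact_mod_cast this
      omega
    simp only [Set.mem_setOf_eq, not_not] at hnB
    exact hnB.le
  exact (Set.countable_iUnion fun N => (hfin N).countable).mono hsub
end

section
/- Let X ⊆ Σ^{ℤ^d} be a subshift. Then the group F(X) is generated by the admissible involutions ξ_{a,b}: every φ ∈ F(X) is a finite composition of maps ξ_{a,b} with a,b ∈ Σ^{B_n} for some n such that ξ_{a,b} maps X into X, where ξ_{a,b}(x) replaces the pattern a on B_n by b if x|_{B_n} = a, replaces b by a if x|_{B_n} = b, and fixes all other points and coordinates. -/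
/-!
STATEMENT 1: For a subshift `X ⊆ Σ^{ℤ^d}`, the group `F(X)` of uniformly
finite-dimensional homeomorphisms is generated by the admissible swap involutions `ξ_{a,b}`:
every `φ ∈ F(X)` is a finite composition of maps `ξ_{a,b}` (with `a, b` patterns on a
ball `B_n`) that map `X` into `X`.
-/

open MeasureTheory Filter Real

attribute [local instance] Classical.propDecidable

namespace PaperStmt

/-- Configurations over the lattice `ℤ^d` with alphabet `A`. -/
abbrev Cfg (d : ℕ) (A : Type*) := (Fin d → ℤ) → A

/-- The sup-norm `‖k‖ = max_i |k_i|` of a lattice point. -/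
def znorm {d : ℕ} (k : Fin d → ℤ) : ℕ := Finset.univ.sup fun i => (k i).natAbs

/-- The shift action: `(shift n x) k = x (k + n)`. -/
def shift {d : ℕ} {A : Type*} (n : Fin d → ℤ) (x : Cfg d A) : Cfg d A := fun k => x (k + n)

variable {d : ℕ} {A : Type*}

/-- A subshift: a nonempty, closed, shift-invariant set of configurations. -/
def IsSubshift [TopologicalSpace A] (X : Set (Cfg d A)) : Prop :=
  X.Nonempty ∧ IsClosed X ∧ ∀ (n : Fin d → ℤ), ∀ x ∈ X, shift n x ∈ X

/-- The swap involution `ξ_{a,b}`: on the ball `B_n = {k : ‖k‖ ≤ n}`, it replaces the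
pattern of `a` by that of `b` and vice versa, fixing all other points and all
coordinates outside `B_n`. -/
noncomputable def xi (n : ℕ) (a b : Cfg d A) (x : Cfg d A) : Cfg d A := fun k =>
  if znorm k ≤ n then
    if ∀ j : Fin d → ℤ, znorm j ≤ n → x j = a j then b k
    else if ∀ j : Fin d → ℤ, znorm j ≤ n → x j = b j then a k
    else x k
  else x k

/-- An admissible swap for `X`: a map of the form `ξ_{a,b}` sending `X` into `X`. -/
def IsAdmissibleSwap (X : Set (Cfg d A)) (g : Cfg d A → Cfg d A) : Prop :=
  ∃ (n : ℕ) (a b : Cfg d A), g = xi n a b ∧ ∀ x ∈ X, g x ∈ X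

-- permutation decomposition lemma
lemma perm_decomp_aux {S : Type*} [Fintype S] [DecidableEq S] (R : S → S → Prop)
    (hrefl : ∀ a, R a a) (htrans : ∀ {a b c}, R a b → R b c → R a c) :
    ∀ n : ℕ, ∀ σ : Equiv.Perm S, σ.support.card ≤ n → (∀ x, R x (σ x)) →
      ∃ L : List (Equiv.Perm S),
        (∀ τ ∈ L, ∃ a b, R a b ∧ τ = Equiv.swap a b) ∧ L.prod = σ := by
  intro n
  induction n with
  | zero =>
    intro σ hcard _
    have : σ = 1 := by
      rw [← Equiv.Perm.card_support_eq_zero]; omega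
    exact ⟨[], by simp, by simp [this]⟩
  | succ n ih =>
    intro σ hcard hR
    by_cases h1 : σ = 1
    · exact ⟨[], by simp, by simp [h1]⟩
    · obtain ⟨a, ha⟩ : ∃ a, σ a ≠ a := by
        by_contra h; push_neg at h; exact h1 (Equiv.ext fun x => by simp [h x])
      set τ := Equiv.swap a (σ a) with hτ
      set σ' := τ * σ with hσ'
      have hσ'a : σ' a = a := by simp [hσ', hτ, Equiv.Perm.mul_apply, Equiv.swap_apply_right]
      have hsub : σ'.support ⊆ σ.support.erase a := by
        intro x hx
        rw [Equiv.Perm.mem_support] at hx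
        rw [Finset.mem_erase, Equiv.Perm.mem_support]
        constructor
        · rintro rfl; exact hx hσ'a
        · intro hfix
          apply hx
          have hxa : x ≠ a := by rintro rfl; exact hx hσ'a
          have hxsa : x ≠ σ a := by
            rintro rfl; exact ha (σ.injective (by rw [hfix]))
          simp [hσ', hτ, Equiv.Perm.mul_apply, hfix, Equiv.swap_apply_of_ne_of_ne hxa hxsa]
      have hcard' : σ'.support.card ≤ n := by
        have h1 : σ'.support.card ≤ (σ.support.erase a).card := Finset.card_le_card hsub
        have h2 : a ∈ σ.support := Equiv.Perm.mem_support.2 ha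
        have h3 := Finset.card_erase_of_mem h2
        have h4 : 1 ≤ σ.support.card := Finset.card_pos.2 ⟨a, h2⟩
        omega
      have hR' : ∀ x, R x (σ' x) := by
        intro x
        by_cases hxa : σ x = a
        · have : σ' x = σ a := by simp [hσ', hτ, Equiv.Perm.mul_apply, hxa, Equiv.swap_apply_left]
          rw [this]
          exact htrans (hxa ▸ hR x) (hR a)
        · by_cases hxsa : σ x = σ a
          · have hxa' : x = a := σ.injective hxsa
            have : σ' x = x := by
              simp [hσ', hτ, Equiv.Perm.mul_apply, hxsa, Equiv.swap_apply_right, hxa']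
            rw [this]; exact hrefl x
          · have : σ' x = σ x := by
              simp [hσ', hτ, Equiv.Perm.mul_apply, Equiv.swap_apply_of_ne_of_ne hxa hxsa]
            rw [this]; exact hR x
      obtain ⟨L, hL, hprod⟩ := ih σ' hcard' hR'
      refine ⟨τ :: L, ?_, ?_⟩
      · intro g hg
        rcases List.mem_cons.1 hg with rfl | hg'
        · exact ⟨a, σ a, hR a, rfl⟩
        · exact hL g hg'
      · simp only [List.prod_cons, hprod, hσ']
        rw [← mul_assoc, Equiv.swap_mul_self, one_mul]


lemma ball_finite (m : ℕ) : {k : Fin d → ℤ | znorm k ≤ m}.Finite := by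
  apply Set.Finite.subset (Set.Finite.pi (fun i : Fin d => Set.finite_Icc (-(m:ℤ)) m))
  intro k hk
  simp only [Set.mem_pi, Set.mem_univ, Set.mem_Icc, forall_true_left]
  intro i
  have h1 : (k i).natAbs ≤ znorm k :=
    Finset.le_sup (f := fun j => (k j).natAbs) (Finset.mem_univ i)
  have h2 : znorm k ≤ m := hk
  omega

lemma exists_block_radius [Fintype A] [TopologicalSpace A] [DiscreteTopology A]
    {X : Set (Cfg d A)} (hcl : IsClosed X) (F : X → Cfg d A) (hF : Continuous F) (N : ℕ) :
    ∃ m : ℕ, N ≤ m ∧ ∀ x y : X, (∀ k, znorm k ≤ m → x.1 k = y.1 k) →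
      ∀ k, znorm k ≤ N → F x k = F y k := by
  have key : ∀ x : X, ∃ I : Finset (Fin d → ℤ),
      ∀ y : X, (∀ i ∈ I, y.1 i = x.1 i) → ∀ k, znorm k ≤ N → F y k = F x k := by
    intro x
    have hWopen : IsOpen {y : X | ∀ k, znorm k ≤ N → F y k = F x k} := by
      have heq : {y : X | ∀ k, znorm k ≤ N → F y k = F x k} =
          ⋂ k ∈ {k | znorm k ≤ N}, {y : X | F y k = F x k} := by
        ext y; simp
      rw [heq]
      apply (ball_finite N).isOpen_biInter
      intro k _
      exact IsOpen.preimage ((continuous_apply k).comp hF) (isOpen_discrete {F x k})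
    rw [isOpen_induced_iff] at hWopen
    obtain ⟨O, hO, hOeq⟩ := hWopen
    have hxO : x.1 ∈ O := by
      have : x ∈ Subtype.val ⁻¹' O := by
        rw [hOeq]; intro k _; rfl
      exact this
    obtain ⟨I, u, hu, hsub⟩ := (isOpen_pi_iff.1 hO) x.1 hxO
    refine ⟨I, fun y hy k hk => ?_⟩
    have hyO : y.1 ∈ O := by
      apply hsub
      intro i hi
      rw [hy i hi]
      exact (hu i hi).2
    have : y ∈ Subtype.val ⁻¹' O := hyO
    rw [hOeq] at this
    exact this k hk
  choose I hI using key
  have hCopen : ∀ x : X, IsOpen {y : Cfg d A | ∀ i ∈ I x, y i = x.1 i} := by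
    intro x
    have heq : {y : Cfg d A | ∀ i ∈ I x, y i = x.1 i} =
        ⋂ i ∈ (I x : Set (Fin d → ℤ)), (fun y : Cfg d A => y i) ⁻¹' {x.1 i} := by
      ext y; simp
    rw [heq]
    exact (I x).finite_toSet.isOpen_biInter fun i _ =>
      IsOpen.preimage (continuous_apply i) (isOpen_discrete _)
  have hcover : X ⊆ ⋃ x : X, {y : Cfg d A | ∀ i ∈ I x, y i = x.1 i} := by
    intro z hz
    exact Set.mem_iUnion.2 ⟨⟨z, hz⟩, fun i _ => rfl⟩
  obtain ⟨t, ht⟩ := (hcl.isCompact).elim_finite_subcover _ hCopen hcover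
  refine ⟨max N (t.sup fun x => (I x).sup znorm), le_max_left _ _, ?_⟩
  intro x y hagree k hk
  obtain ⟨z, hzt, hyz⟩ : ∃ z ∈ t, ∀ i ∈ I z, y.1 i = z.1 i := by
    have := ht y.2
    simp only [Set.mem_iUnion] at this
    obtain ⟨z, hz1, hz2⟩ := this
    exact ⟨z, hz1, hz2⟩
  have hxz : ∀ i ∈ I z, x.1 i = z.1 i := by
    intro i hi
    have h1 : znorm i ≤ (I z).sup znorm := Finset.le_sup hi
    have h2 : (I z).sup znorm ≤ t.sup fun x => (I x).sup znorm :=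
      Finset.le_sup (f := fun x => (I x).sup znorm) hzt
    rw [hagree i (le_trans (le_trans h1 h2) (le_max_right N _))]
    exact hyz i hi
  rw [hI z y hyz k hk, hI z x hxz k hk]

/-- Patterns on the ball of radius `m`. -/
def Pat (d m : ℕ) (A : Type*) := {k : Fin d → ℤ // znorm k ≤ m} → A

lemma pat_finite [Fintype A] (m : ℕ) : Finite (Pat d m A) := by
  haveI : Finite {k : Fin d → ℤ // znorm k ≤ m} := (ball_finite m).to_subtype
  exact Pi.finite

/-- Restriction of a configuration to the ball of radius `m`. -/
def restrictP (m : ℕ) (x : Cfg d A) : Pat d m A := fun k => x k.1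

/-- Overwrite a configuration with a pattern on the ball of radius `m`. -/
noncomputable def patch (m : ℕ) (x : Cfg d A) (p : Pat d m A) : Cfg d A := fun k =>
  if h : znorm k ≤ m then p ⟨k, h⟩ else x k

lemma restrict_patch (m : ℕ) (x : Cfg d A) (p : Pat d m A) :
    restrictP m (patch m x p) = p :=
  funext fun k => by simp [restrictP, patch, k.2]

lemma patch_patch (m : ℕ) (x : Cfg d A) (p q : Pat d m A) :
    patch m (patch m x p) q = patch m x q :=
  funext fun k => by by_cases h : znorm k ≤ m <;> simp [patch, h]

lemma patch_restrict (m : ℕ) (x : Cfg d A) : patch m x (restrictP m x) = x :=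
  funext fun k => by by_cases h : znorm k ≤ m <;> simp [patch, restrictP, h]

lemma patch_congr (m : ℕ) {x y : Cfg d A} (h : ∀ k, ¬ znorm k ≤ m → x k = y k)
    (p : Pat d m A) : patch m x p = patch m y p :=
  funext fun k => by by_cases hk : znorm k ≤ m <;> simp [patch, hk, h]

lemma xi_eq (m : ℕ) (a b : Pat d m A) (ca cb : Cfg d A)
    (hca : restrictP m ca = a) (hcb : restrictP m cb = b) (y : Cfg d A) :
    xi m ca cb y = patch m y (Equiv.swap a b (restrictP m y)) := by
  have hcond : ∀ (p : Pat d m A) (cp : Cfg d A), restrictP m cp = p →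
      ((∀ j : Fin d → ℤ, znorm j ≤ m → y j = cp j) ↔ restrictP m y = p) := by
    intro p cp hp
    constructor
    · intro h
      funext j
      rw [← hp]
      exact h j.1 j.2
    · intro h j hj
      have := congrFun h ⟨j, hj⟩
      rw [← hp] at this
      exact this
  funext k
  unfold xi patch
  by_cases hk : znorm k ≤ m
  · simp only [hk, if_true, dif_pos]
    by_cases h1 : restrictP m y = a
    · rw [if_pos ((hcond a ca hca).2 h1), h1, Equiv.swap_apply_left]
      exact congrFun hcb ⟨k, hk⟩
    · rw [if_neg (fun h => h1 ((hcond a ca hca).1 h))]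
      by_cases h2 : restrictP m y = b
      · rw [if_pos ((hcond b cb hcb).2 h2), h2, Equiv.swap_apply_right]
        exact congrFun hca ⟨k, hk⟩
      · rw [if_neg (fun h => h2 ((hcond b cb hcb).1 h)), Equiv.swap_apply_of_ne_of_ne h1 h2]
        rfl
  · simp [hk]

/-- The symmetric admissibility relation on patterns. -/
def Rsw (m : ℕ) (X : Set (Cfg d A)) (p q : Pat d m A) : Prop :=
  (∀ x ∈ X, restrictP m x = p → patch m x q ∈ X) ∧
  (∀ x ∈ X, restrictP m x = q → patch m x p ∈ X)

lemma Rsw_refl (m : ℕ) (X : Set (Cfg d A)) (p : Pat d m A) : Rsw m X p p := by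
  constructor <;> · intro x hx hr; rw [← hr, patch_restrict]; exact hx

lemma Rsw_trans (m : ℕ) (X : Set (Cfg d A)) {p q r : Pat d m A}
    (h1 : Rsw m X p q) (h2 : Rsw m X q r) : Rsw m X p r := by
  constructor
  · intro x hx hr
    have hq : patch m x q ∈ X := h1.1 x hx hr
    have := h2.1 _ hq (restrict_patch m x q)
    rwa [patch_patch] at this
  · intro x hx hr
    have hq : patch m x q ∈ X := h2.2 x hx hr
    have := h1.2 _ hq (restrict_patch m x q)
    rwa [patch_patch] at this

lemma assemble (m : ℕ) (c : Cfg d A) (X : Set (Cfg d A)) :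
    ∀ L : List (Equiv.Perm (Pat d m A)),
      (∀ τ ∈ L, ∃ a b : Pat d m A, Rsw m X a b ∧ τ = Equiv.swap a b) →
      ∃ L' : List (Cfg d A → Cfg d A),
        (∀ g ∈ L', IsAdmissibleSwap X g) ∧
        ∀ y : Cfg d A, (L'.foldr (· ∘ ·) id) y = patch m y (L.prod (restrictP m y)) := by
  intro L
  induction L with
  | nil =>
    intro _
    exact ⟨[], by simp, fun y => by simp [patch_restrict]⟩
  | cons τ L ih =>
    intro hL
    obtain ⟨L', hL', hfold⟩ := ih (fun g hg => hL g (List.mem_cons_of_mem _ hg))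
    obtain ⟨a, b, hab, rfl⟩ := hL τ List.mem_cons_self
    set ca := patch m c a with hca
    set cb := patch m c b with hcb
    have hra : restrictP m ca = a := restrict_patch m c a
    have hrb : restrictP m cb = b := restrict_patch m c b
    have hxiapp : ∀ y, xi m ca cb y = patch m y (Equiv.swap a b (restrictP m y)) :=
      xi_eq m a b ca cb hra hrb
    refine ⟨xi m ca cb :: L', ?_, ?_⟩
    · intro g hg
      rcases List.mem_cons.1 hg with rfl | hg'
      · refine ⟨m, ca, cb, rfl, ?_⟩
        intro x hx
        rw [hxiapp]
        by_cases h1 : restrictP m x = a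
        · rw [h1, Equiv.swap_apply_left]
          exact hab.1 x hx h1
        · by_cases h2 : restrictP m x = b
          · rw [h2, Equiv.swap_apply_right]
            exact hab.2 x hx h2
          · rw [Equiv.swap_apply_of_ne_of_ne h1 h2, patch_restrict]
            exact hx
      · exact hL' g hg'
    · intro y
      have : (List.foldr (· ∘ ·) id (xi m ca cb :: L')) y
          = xi m ca cb ((List.foldr (· ∘ ·) id L') y) := rfl
      rw [this, hfold y, hxiapp, patch_patch, restrict_patch, List.prod_cons,
        Equiv.Perm.mul_apply]


theorem swap_involutions_generate_F
    [Fintype A] [TopologicalSpace A] [DiscreteTopology A]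
    (hd : 0 < d) (X : Set (Cfg d A)) (hX : IsSubshift X)
    (φ : X ≃ₜ X) (N : ℕ)
    (hφ : ∀ (x : X) (k : Fin d → ℤ), N < znorm k → (φ x).1 k = x.1 k) :
    ∃ L : List (Cfg d A → Cfg d A),
      (∀ g ∈ L, IsAdmissibleSwap X g) ∧
      ∀ x : X, (L.foldr (· ∘ ·) id) x.1 = (φ x).1 := by
  obtain ⟨hne, hcl, -⟩ := hX
  -- φ⁻¹ also fixes coordinates outside the ball of radius N
  have hφ' : ∀ (y : X) (k : Fin d → ℤ), N < znorm k → (φ.symm y).1 k = y.1 k := by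
    intro y k hk
    have h := hφ (φ.symm y) k hk
    rw [Homeomorph.apply_symm_apply] at h
    exact h.symm
  -- block radii
  obtain ⟨m1, hm1N, hm1⟩ := exists_block_radius hcl (fun x => (φ x).1)
    (continuous_subtype_val.comp φ.continuous) N
  obtain ⟨m2, hm2N, hm2⟩ := exists_block_radius hcl (fun x => (φ.symm x).1)
    (continuous_subtype_val.comp φ.symm.continuous) N
  set m := max m1 m2 with hm
  have hNm : N ≤ m := le_trans hm1N (le_max_left _ _)
  -- the images under φ, φ⁻¹ depend on the ball of radius m only, within the ball
  have hblock : ∀ x y : X, restrictP m x.1 = restrictP m y.1 →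
      restrictP m (φ x).1 = restrictP m (φ y).1 := by
    intro x y hagree
    have hag : ∀ k, znorm k ≤ m → x.1 k = y.1 k := by
      intro k hk
      exact congrFun hagree ⟨k, hk⟩
    funext k
    rcases le_or_gt (znorm k.1) N with hkN | hkN
    · exact hm1 x y (fun j hj => hag j (le_trans hj (le_max_left _ _))) k.1 hkN
    · show (φ x).1 k.1 = (φ y).1 k.1
      rw [hφ x k.1 hkN, hφ y k.1 hkN]
      exact hag k.1 k.2
  have hblock' : ∀ x y : X, restrictP m x.1 = restrictP m y.1 →
      restrictP m (φ.symm x).1 = restrictP m (φ.symm y).1 := by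
    intro x y hagree
    have hag : ∀ k, znorm k ≤ m → x.1 k = y.1 k := by
      intro k hk
      exact congrFun hagree ⟨k, hk⟩
    funext k
    rcases le_or_gt (znorm k.1) N with hkN | hkN
    · exact hm2 x y (fun j hj => hag j (le_trans hj (le_max_right _ _))) k.1 hkN
    · show (φ.symm x).1 k.1 = (φ.symm y).1 k.1
      rw [hφ' x k.1 hkN, hφ' y k.1 hkN]
      exact hag k.1 k.2
  -- patching a point of X with the φ-image pattern gives the φ-image
  have hpatchφ : ∀ x : X, patch m x.1 (restrictP m (φ x).1) = (φ x).1 := by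
    intro x
    funext k
    by_cases hk : znorm k ≤ m
    · simp [patch, hk, restrictP]
    · have hkN : N < znorm k := by omega
      simp [patch, hk, (hφ x k hkN).symm]
  have hpatchφ' : ∀ x : X, patch m x.1 (restrictP m (φ.symm x).1) = (φ.symm x).1 := by
    intro x
    funext k
    by_cases hk : znorm k ≤ m
    · simp [patch, hk, restrictP]
    · have hkN : N < znorm k := by omega
      simp [patch, hk, (hφ' x k hkN).symm]
  -- the induced permutation of patterns
  set Pi0 : Pat d m A → Pat d m A := fun p =>
    if h : ∃ x : X, restrictP m x.1 = p then restrictP m (φ h.choose).1 else p with hPi0def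
  set Pi1 : Pat d m A → Pat d m A := fun p =>
    if h : ∃ x : X, restrictP m x.1 = p then restrictP m (φ.symm h.choose).1 else p with hPi1def
  have wellPi0 : ∀ x : X, Pi0 (restrictP m x.1) = restrictP m (φ x).1 := by
    intro x
    have h : ∃ y : X, restrictP m y.1 = restrictP m x.1 := ⟨x, rfl⟩
    rw [hPi0def]
    simp only [dif_pos h]
    exact hblock h.choose x h.choose_spec
  have wellPi1 : ∀ x : X, Pi1 (restrictP m x.1) = restrictP m (φ.symm x).1 := by
    intro x
    have h : ∃ y : X, restrictP m y.1 = restrictP m x.1 := ⟨x, rfl⟩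
    rw [hPi1def]
    simp only [dif_pos h]
    exact hblock' h.choose x h.choose_spec
  have hleft : ∀ p, Pi1 (Pi0 p) = p := by
    intro p
    by_cases h : ∃ x : X, restrictP m x.1 = p
    · obtain ⟨x, hx⟩ := h
      rw [← hx, wellPi0 x, wellPi1 (φ x), Homeomorph.symm_apply_apply]
    · have h1 : Pi0 p = p := dif_neg h
      rw [h1]
      exact dif_neg h
  have hright : ∀ p, Pi0 (Pi1 p) = p := by
    intro p
    by_cases h : ∃ x : X, restrictP m x.1 = p
    · obtain ⟨x, hx⟩ := h
      rw [← hx, wellPi1 x, wellPi0 (φ.symm x), Homeomorph.apply_symm_apply]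
    · have h1 : Pi1 p = p := dif_neg h
      rw [h1]
      exact dif_neg h
  set σ : Equiv.Perm (Pat d m A) := ⟨Pi0, Pi1, hleft, hright⟩ with hσdef
  have hσ : ∀ x : X, σ (restrictP m x.1) = restrictP m (φ x).1 := wellPi0
  -- admissibility of swaps within σ-orbits
  have hRσ : ∀ p, Rsw m X p (σ p) := by
    intro p
    constructor
    · intro x hx hr
      have h1 : σ p = restrictP m (φ ⟨x, hx⟩).1 := by
        rw [← hr]
        exact hσ ⟨x, hx⟩
      rw [h1, hpatchφ ⟨x, hx⟩]
      exact (φ ⟨x, hx⟩).2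
    · intro x hx hr
      have h2 : restrictP m (φ.symm ⟨x, hx⟩).1 = p := by
        rw [← wellPi1 ⟨x, hx⟩]
        show Pi1 (restrictP m x) = p
        rw [hr]
        exact hleft p
      have h3 : patch m x p = (φ.symm ⟨x, hx⟩).1 := by
        rw [← h2]
        funext k
        by_cases hk : znorm k ≤ m
        · simp [patch, hk, restrictP]
        · have hkN : N < znorm k := by omega
          simp [patch, hk, (hφ' ⟨x, hx⟩ k hkN)]
      rw [h3]
      exact (φ.symm ⟨x, hx⟩).2
  -- decompose σ into swaps
  haveI : Finite (Pat d m A) := pat_finite m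
  haveI : Fintype (Pat d m A) := Fintype.ofFinite _
  obtain ⟨L, hLmem, hLprod⟩ := perm_decomp_aux (Rsw m X) (Rsw_refl m X)
    (fun h1 h2 => Rsw_trans m X h1 h2) σ.support.card σ le_rfl hRσ
  obtain ⟨L', hadm, hfold⟩ := assemble m hne.choose X L hLmem
  refine ⟨L', hadm, ?_⟩
  intro x
  rw [hfold x.1, hLprod, hσ x, hpatchφ x]

end PaperStmt
end

section
/- Let X ⊆ Σ^ℤ be a subshift, ν a non-atomic shift-invariant Borel probability measure on X, P the symmetric Bernoulli(1/2,1/2) product measure on {−1,1}^ℤ, and ν̂ = (P × ν) ∘ π^{−1} on the Kalikow-type subshift X̂. Then ν̂ is 𝔗_{X̂}-invariant: for every Borel injection g : A → B with graph contained in 𝔗_{X̂} and every Borel A' ⊆ A, ν̂(g(A')) = ν̂(A'). -/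
/-!
STATEMENT 10: Let `X ⊆ Σ^ℤ` be a subshift, `ν` a non-atomic shift-invariant Borel
probability measure on `X`, `P` the symmetric Bernoulli(1/2,1/2) measure on `{−1,1}^ℤ`,
and `ν̂ = (P × ν) ∘ π^{−1}` on the Kalikow-type subshift `X̂`. Then `ν̂` is
`𝔗_{X̂}`-invariant.
-/

open MeasureTheory Filter

namespace PaperStmt

def shift1 {A : Type*} (x : ℤ → A) : ℤ → A := fun k => x (k + 1)

def shiftBy {A : Type*} (i : ℤ) (x : ℤ → A) : ℤ → A := fun k => x (k + i)

def IsSubshift1 {A : Type*} [TopologicalSpace A] (X : Set (ℤ → A)) : Prop :=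
  X.Nonempty ∧ IsClosed X ∧ ∀ n : ℤ, ∀ x ∈ X, shiftBy n x ∈ X

noncomputable def walk (w : ℤ → ℤ) (n : ℤ) : ℤ :=
  if 0 ≤ n then ∑ j ∈ Finset.Ico (0 : ℤ) n, w j else -∑ j ∈ Finset.Ico n (0 : ℤ), w j

noncomputable def kalikowPi {A : Type*} (w : ℤ → ℤ) (y : ℤ → A) : ℤ → ℤ × A :=
  fun n => (w n, y (walk w n))

/-- The Kalikow-type subshift associated to a subshift `X`. -/
def kalikowShift {A : Type*} (X : Set (ℤ → A)) : Set (ℤ → ℤ × A) :=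
  {z | ∃ w : ℤ → ℤ, (∀ j : ℤ, w j = 1 ∨ w j = -1) ∧ ∃ y ∈ X, z = kalikowPi w y}

def gibbsRel1 {A : Type*} (X : Set (ℤ → A)) : Set ((ℤ → A) × (ℤ → A)) :=
  {p | p.1 ∈ X ∧ p.2 ∈ X ∧ {k : ℤ | p.1 k ≠ p.2 k}.Finite}

def IsTailInvariant1 {A : Type*} [MeasurableSpace A] (μ : Measure (ℤ → A))
    (R : Set ((ℤ → A) × (ℤ → A))) : Prop :=
  ∀ (D : Set (ℤ → A)) (g : (ℤ → A) → (ℤ → A)), MeasurableSet D →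
    Measurable (D.restrict g) → Set.InjOn g D → (∀ x ∈ D, (x, g x) ∈ R) →
    ∀ A' ⊆ D, MeasurableSet A' → μ (g '' A') = μ A'


/-! ### Auxiliary machinery -/

def flipF (S : Finset ℤ) (w : ℤ → ℤ) : ℤ → ℤ := fun j => if j ∈ S then -w j else w j

lemma flipF_flipF (S : Finset ℤ) (w : ℤ → ℤ) : flipF S (flipF S w) = w := by
  funext j; simp only [flipF]; by_cases h : j ∈ S <;> simp [h]

lemma shiftBy_shiftBy {B : Type*} (c c' : ℤ) (y : ℤ → B) :
    shiftBy c (shiftBy c' y) = shiftBy (c + c') y := by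
  funext k; simp [shiftBy, add_assoc]

lemma shiftBy_zero {B : Type*} (y : ℤ → B) : shiftBy (0 : ℤ) y = y := by
  funext k; simp [shiftBy]

lemma int_Ico_union {a b c : ℤ} (h1 : a ≤ b) (h2 : b ≤ c) :
    Finset.Ico a b ∪ Finset.Ico b c = Finset.Ico a c := by
  ext j; simp only [Finset.mem_union, Finset.mem_Ico]; omega
lemma int_sum_Ico (w : ℤ → ℤ) {a b c : ℤ} (h1 : a ≤ b) (h2 : b ≤ c) :
    ∑ j ∈ Finset.Ico a b, w j + ∑ j ∈ Finset.Ico b c, w j = ∑ j ∈ Finset.Ico a c, w j := by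
  rw [← int_Ico_union h1 h2, Finset.sum_union]
  rw [Finset.disjoint_left]; intro j hj hj'
  simp only [Finset.mem_Ico] at hj hj'; omega
lemma walk_zero (w : ℤ → ℤ) : walk w 0 = 0 := by simp [walk]

lemma walk_sub (w : ℤ → ℤ) {a b : ℤ} (hab : a ≤ b) :
    walk w b - walk w a = ∑ j ∈ Finset.Ico a b, w j := by
  rcases le_or_gt 0 a with ha | ha
  · rw [walk, walk, if_pos ha, if_pos (le_trans ha hab),
      ← int_sum_Ico w ha hab]; ring
  · rcases le_or_gt 0 b with hb | hb
    · rw [walk, walk, if_pos hb, if_neg (not_le.2 ha),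
        ← int_sum_Ico w ha.le hb]; ring
    · rw [walk, walk, if_neg (not_le.2 ha), if_neg (not_le.2 hb),
        ← int_sum_Ico w hab hb.le]; ring

lemma walk_succ (w : ℤ → ℤ) (n : ℤ) : walk w (n + 1) = walk w n + w n := by
  have h := walk_sub w (le_of_lt (lt_add_one n))
  have : Finset.Ico n (n + 1) = {n} := by ext j; simp [Finset.mem_Ico]; omega
  rw [this, Finset.sum_singleton] at h; omega

lemma walk_bound {w : ℤ → ℤ} (hw : ∀ j, w j = 1 ∨ w j = -1) {a b : ℤ} (hab : a ≤ b) :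
    |walk w b - walk w a| ≤ b - a := by
  rw [walk_sub w hab]
  calc |∑ j ∈ Finset.Ico a b, w j| ≤ ∑ j ∈ Finset.Ico a b, |w j| :=
        Finset.abs_sum_le_sum_abs _ _
    _ ≤ ∑ _j ∈ Finset.Ico a b, 1 := by
        apply Finset.sum_le_sum; intro j _; rcases hw j with h | h <;> simp [h]
    _ = b - a := by
        rw [Finset.sum_const, Int.card_Ico]; simp; omega

def RecW (w : ℤ → ℤ) : Prop := ∀ (m : ℤ) (N : ℕ), ∃ n : ℕ, N ≤ n ∧ walk w (n : ℤ) = m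

lemma walk_ivt {w : ℤ → ℤ} (hw : ∀ j, w j = 1 ∨ w j = -1) (m : ℤ) :
    ∀ (d : ℕ) (n₁ : ℕ), walk w (n₁ : ℤ) ≤ m → m ≤ walk w ((n₁ : ℤ) + d) →
      ∃ n : ℕ, n₁ ≤ n ∧ walk w (n : ℤ) = m := by
  intro d
  induction d with
  | zero =>
    intro n₁ h1 h2; norm_num at h2
    exact ⟨n₁, le_refl _, le_antisymm h1 h2⟩
  | succ d ih =>
    intro n₁ h1 h2
    rcases eq_or_lt_of_le h1 with heq | hlt
    · exact ⟨n₁, le_refl _, heq⟩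
    · have hs : walk w ((n₁ : ℤ) + 1) ≤ m := by
        have := walk_succ w (n₁ : ℤ)
        rcases hw (n₁ : ℤ) with h | h <;> omega
      have h2' : m ≤ walk w (((n₁ + 1 : ℕ) : ℤ) + d) := by
        push_cast; push_cast at h2
        have : (n₁ : ℤ) + 1 + d = n₁ + (d + 1) := by ring
        rwa [this]
      obtain ⟨n, hn1, hn2⟩ := ih (n₁ + 1) (by push_cast; exact hs) h2'
      exact ⟨n, by omega, hn2⟩

lemma recW_of_unbounded {w : ℤ → ℤ} (hw : ∀ j, w j = 1 ∨ w j = -1)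
    (hup : ∀ K : ℤ, ∃ n : ℕ, K ≤ walk w (n : ℤ))
    (hdown : ∀ K : ℤ, ∃ n : ℕ, walk w (n : ℤ) ≤ K) : RecW w := by
  intro m N
  -- find n₁ ≥ N with walk ≤ m
  obtain ⟨n₁, hn₁⟩ := hdown (min m ((Finset.range (N + 1)).inf' Finset.nonempty_range_add_one (fun n => walk w (n : ℤ))) - 1)
  have hn₁N : N ≤ n₁ := by
    by_contra h
    have : (Finset.range (N + 1)).inf' Finset.nonempty_range_add_one (fun n => walk w (n : ℤ)) ≤ walk w (n₁ : ℤ) :=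
      Finset.inf'_le (fun n : ℕ => walk w (n : ℤ)) (Finset.mem_range.2 (by omega))
    omega
  have hn₁m : walk w (n₁ : ℤ) ≤ m := by omega
  -- find n₂ ≥ n₁ with walk ≥ m
  obtain ⟨n₂, hn₂⟩ := hup (max m ((Finset.range (n₁ + 1)).sup' Finset.nonempty_range_add_one (fun n => walk w (n : ℤ))) + 1)
  have hn₂n₁ : n₁ ≤ n₂ := by
    by_contra h
    have : walk w (n₂ : ℤ) ≤ (Finset.range (n₁ + 1)).sup' Finset.nonempty_range_add_one (fun n => walk w (n : ℤ)) :=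
      Finset.le_sup' (fun n : ℕ => walk w (n : ℤ)) (Finset.mem_range.2 (by omega))
    omega
  have hn₂m : m ≤ walk w (n₂ : ℤ) := by omega
  obtain ⟨n, hn1, hn2⟩ := walk_ivt hw m (n₂ - n₁) n₁ hn₁m
    (by rw [show (n₁ : ℤ) + ((n₂ - n₁ : ℕ) : ℤ) = (n₂ : ℤ) by push_cast; omega]; exact hn₂m)
  exact ⟨n, le_trans hn₁N hn1, hn2⟩

lemma walk_eventually_diff {w w' : ℤ → ℤ} (hd : {j : ℤ | w j ≠ w' j}.Finite) :
    ∃ (N : ℕ) (cp cm : ℤ), (∀ n : ℤ, (N : ℤ) ≤ n → walk w' n = walk w n + cp) ∧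
      (∀ n : ℤ, n ≤ -(N : ℤ) → walk w' n = walk w n + cm) := by
  set N : ℕ := (hd.toFinset.sup (fun j => j.natAbs)) + 1 with hN
  have key : ∀ j : ℤ, (N : ℤ) ≤ j ∨ j < -(N : ℤ) → w j = w' j := by
    intro j hj
    by_contra h
    have hmem : j ∈ hd.toFinset := by simp [Set.Finite.mem_toFinset]; exact h
    have h2 : j.natAbs ≤ hd.toFinset.sup (fun j => j.natAbs) := Finset.le_sup hmem
    omega
  refine ⟨N, walk w' N - walk w N, walk w' (-(N : ℤ)) - walk w (-(N : ℤ)), ?_, ?_⟩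
  · intro n hn
    have h1 := walk_sub w hn
    have h2 := walk_sub w' hn
    have heq : ∑ j ∈ Finset.Ico (N : ℤ) n, w j = ∑ j ∈ Finset.Ico (N : ℤ) n, w' j := by
      apply Finset.sum_congr rfl; intro j hj
      simp only [Finset.mem_Ico] at hj; exact key j (Or.inl hj.1)
    omega
  · intro n hn
    have h1 := walk_sub w hn
    have h2 := walk_sub w' hn
    have heq : ∑ j ∈ Finset.Ico n (-(N : ℤ)), w j = ∑ j ∈ Finset.Ico n (-(N : ℤ)), w' j := by
      apply Finset.sum_congr rfl; intro j hj
      simp only [Finset.mem_Ico] at hj; exact key j (Or.inr hj.2)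
    omega

lemma recW_of_finite_diff {w w' : ℤ → ℤ} (hrec : RecW w)
    (hd : {j : ℤ | w j ≠ w' j}.Finite) : RecW w' := by
  obtain ⟨N₀, cp, cm, hp, -⟩ := walk_eventually_diff hd
  intro m N
  obtain ⟨n, hn1, hn2⟩ := hrec (m - cp) (max N N₀)
  refine ⟨n, le_trans (le_max_left _ _) hn1, ?_⟩
  rw [hp (n : ℤ) (by exact_mod_cast le_trans (le_max_right N N₀) hn1), hn2]; omega


lemma kalikow_inj {B : Type*} {w w₂ : ℤ → ℤ} {y y₂ : ℤ → B} (hrec : RecW w)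
    (h : kalikowPi w y = kalikowPi w₂ y₂) : w = w₂ ∧ y = y₂ := by
  have hw : w = w₂ := by
    funext n; exact congrArg Prod.fst (congrFun h n)
  refine ⟨hw, ?_⟩
  funext k
  obtain ⟨n, -, hn⟩ := hrec k 0
  have := congrArg Prod.snd (congrFun h (n : ℤ))
  simp only [kalikowPi] at this
  rw [← hw] at this
  rwa [hn] at this

lemma core_claim {B : Type*} {w w' : ℤ → ℤ} {y y' : ℤ → B}
    (hw : ∀ j, w j = 1 ∨ w j = -1) (hrec : RecW w) (hw' : ∀ j, w' j = 1 ∨ w' j = -1)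
    (hfin : {k : ℤ | kalikowPi w' y' k ≠ kalikowPi w y k}.Finite) :
    ∃ (S : Finset ℤ) (c : ℤ), kalikowPi w' y' = kalikowPi (flipF S w) (shiftBy c y) := by
  have hdsub : {j : ℤ | w j ≠ w' j} ⊆ {k : ℤ | kalikowPi w' y' k ≠ kalikowPi w y k} := by
    intro j hj hk
    exact hj (congrArg Prod.fst hk).symm
  have hd : {j : ℤ | w j ≠ w' j}.Finite := hfin.subset hdsub
  obtain ⟨N₁, cp, cm, hp, -⟩ := walk_eventually_diff hd
  -- N₂ bounding the kalikow differences
  set T := hfin.toFinset with hT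
  set N₂ : ℕ := (T.sup (fun j => j.natAbs)) + 1 with hN₂
  have hagree : ∀ n : ℤ, (N₂ : ℤ) ≤ n → kalikowPi w' y' n = kalikowPi w y n := by
    intro n hn
    by_contra h
    have hmem : n ∈ T := by rw [hT, Set.Finite.mem_toFinset]; exact h
    have h2 : n.natAbs ≤ T.sup (fun j => j.natAbs) := Finset.le_sup hmem
    omega
  set N : ℕ := max N₁ N₂ with hN
  have key : ∀ k : ℤ, y' (k + cp) = y k := by
    intro k
    obtain ⟨n, hn1, hn2⟩ := hrec k N
    have hNn : (N : ℤ) ≤ (n : ℤ) := by exact_mod_cast hn1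
    have h1 := hagree (n : ℤ) (le_trans (Nat.cast_le.mpr (le_max_right N₁ N₂)) hNn)
    have h2 := congrArg Prod.snd h1
    simp only [kalikowPi] at h2
    rw [hp (n : ℤ) (le_trans (Nat.cast_le.mpr (le_max_left N₁ N₂)) hNn), hn2] at h2
    exact h2
  refine ⟨hd.toFinset, -cp, ?_⟩
  have hflip : flipF hd.toFinset w = w' := by
    funext j
    by_cases hj : j ∈ hd.toFinset
    · have hne : w j ≠ w' j := hd.mem_toFinset.1 hj
      rcases hw j with h1 | h1 <;> rcases hw' j with h2 | h2 <;>
        simp only [flipF, if_pos hj] <;> omega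
    · have heq : w j = w' j := not_not.1 (fun hc => hj (hd.mem_toFinset.2 hc))
      simp only [flipF, if_neg hj]
      exact heq
  rw [hflip]
  funext n
  simp only [kalikowPi, shiftBy]
  refine Prod.ext rfl ?_
  have := key (walk w' n - cp)
  simp only [sub_add_cancel] at this
  rw [show walk w' n + -cp = walk w' n - cp by ring, ← this]

def Gset : Set (ℤ → ℤ) := {w | ∀ j : ℤ, w j = 1 ∨ w j = -1}
def cylSet (F : Finset ℤ) (a : ℤ → ℤ) : Set (ℤ → ℤ) := {w | ∀ j ∈ F, w j = a j}
def IsBer (Q : Measure (ℤ → ℤ)) : Prop :=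
  IsProbabilityMeasure Q ∧ Q Gset = 1 ∧
    ∀ (F : Finset ℤ) (a : ℤ → ℤ), (∀ j ∈ F, a j = 1 ∨ a j = -1) →
      Q (cylSet F a) = (1 / 2 : ENNReal) ^ F.card
lemma measurable_eval (j : ℤ) : Measurable (fun w : ℤ → ℤ => w j) := measurable_pi_apply j
lemma measurableSet_cyl (F : Finset ℤ) (a : ℤ → ℤ) : MeasurableSet (cylSet F a) := by
  have : cylSet F a = ⋂ j ∈ F, (fun w : ℤ → ℤ => w j) ⁻¹' {a j} := by
    ext w; simp [cylSet]
  rw [this]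
  exact MeasurableSet.biInter F.countable_toSet (fun j _ => measurable_eval j (by trivial))
lemma measurableSet_G : MeasurableSet Gset := by
  have : Gset = ⋂ j : ℤ, (fun w : ℤ → ℤ => w j) ⁻¹' {1, -1} := by
    ext w; simp [Gset, Set.mem_iInter]
  rw [this]
  exact MeasurableSet.iInter (fun j => measurable_eval j (by trivial))
def cylFam : Set (Set (ℤ → ℤ)) := {s | ∃ F a, s = cylSet F a}
def DepOn (s : Set (ℤ → ℤ)) (J : Finset ℤ) : Prop :=
  ∀ w w' : ℤ → ℤ, (∀ j ∈ J, w j = w' j) → (w ∈ s ↔ w' ∈ s)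
noncomputable def extp (J : Finset ℤ) (p : ∀ j ∈ J, ℤ) : ℤ → ℤ :=
  fun j => if h : j ∈ J then p j h else 1
noncomputable def goodPatts (J : Finset ℤ) (s : Set (ℤ → ℤ)) : Finset (∀ j ∈ J, ℤ) :=
  @Finset.filter _ (fun p => extp J p ∈ s) (Classical.decPred _)
    (J.pi (fun _ => ({1, -1} : Finset ℤ)))
lemma mem_goodPatts {J : Finset ℤ} {s : Set (ℤ → ℤ)} {p : ∀ j ∈ J, ℤ} :
    p ∈ goodPatts J s ↔ (p ∈ J.pi (fun _ => ({1, -1} : Finset ℤ)) ∧ extp J p ∈ s) :=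
  @Finset.mem_filter _ _ (Classical.decPred _) _ _

lemma isBer_G_compl {Q : Measure (ℤ → ℤ)} (hB : IsBer Q) : Q Gsetᶜ = 0 := by
  haveI := hB.1
  exact (prob_compl_eq_zero_iff measurableSet_G).2 hB.2.1
lemma isBer_inter_G {Q : Measure (ℤ → ℤ)} (hB : IsBer Q) (s : Set (ℤ → ℤ)) :
    Q (s ∩ Gset) = Q s := measure_inter_conull (isBer_G_compl hB)

/-! filled proofs start here -/

lemma pi_eq_generateFrom_cyl :
    (inferInstance : MeasurableSpace (ℤ → ℤ)) = MeasurableSpace.generateFrom cylFam := by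
  apply le_antisymm
  · -- pi ≤ generated
    rw [show (inferInstance : MeasurableSpace (ℤ → ℤ)) = MeasurableSpace.pi from rfl]
    refine iSup_le fun j => ?_
    rw [MeasurableSpace.comap_le_iff_le_map]
    intro s _
    rw [MeasurableSpace.map_def]
    have : (fun w : ℤ → ℤ => w j) ⁻¹' s = ⋃ k ∈ s, cylSet {j} (fun _ => k) := by
      ext w; simp [cylSet]
    rw [this]
    exact MeasurableSet.biUnion s.to_countable
      (fun k _ => MeasurableSpace.measurableSet_generateFrom ⟨{j}, fun _ => k, rfl⟩)
  · rw [MeasurableSpace.generateFrom_le_iff]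
    rintro s ⟨F, a, rfl⟩
    exact measurableSet_cyl F a

lemma isPiSystem_cyl : IsPiSystem cylFam := by
  rintro s ⟨F, a, rfl⟩ t ⟨F', a', rfl⟩ hne
  obtain ⟨w₀, hw₀⟩ := hne
  refine ⟨F ∪ F', fun j => if j ∈ F then a j else a' j, ?_⟩
  have hcomp : ∀ j ∈ F ∩ F', a j = a' j := by
    intro j hj
    rw [Finset.mem_inter] at hj
    rw [← hw₀.1 j hj.1, ← hw₀.2 j hj.2]
  ext w
  simp only [Set.mem_inter_iff, cylSet, Set.mem_setOf_eq, Finset.mem_union]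
  constructor
  · rintro ⟨h1, h2⟩ j hj
    by_cases hjF : j ∈ F
    · rw [if_pos hjF]; exact h1 j hjF
    · rw [if_neg hjF]; rcases hj with h | h; · exact absurd h hjF
      exact h2 j h
  · intro h
    constructor
    · intro j hj; have := h j (Or.inl hj); rwa [if_pos hj] at this
    · intro j hj; have := h j (Or.inr hj)
      by_cases hjF : j ∈ F
      · rw [if_pos hjF] at this; rw [this, ← hcomp j (Finset.mem_inter.2 ⟨hjF, hj⟩)]
      · rwa [if_neg hjF] at this

lemma extp_mem_patts {J : Finset ℤ} {p : ∀ j ∈ J, ℤ}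
    (hp : p ∈ J.pi (fun _ => ({1, -1} : Finset ℤ))) :
    ∀ j ∈ J, extp J p j = 1 ∨ extp J p j = -1 := by
  intro j hj
  have := Finset.mem_pi.1 hp j hj
  simp only [Finset.mem_insert, Finset.mem_singleton] at this
  rw [extp, dif_pos hj]
  exact this

lemma decomp {Q : Measure (ℤ → ℤ)} (hB : IsBer Q) {s : Set (ℤ → ℤ)} {J : Finset ℤ}
    (hdep : DepOn s J) {v : Set (ℤ → ℤ)} (hv : MeasurableSet v) :
    Q (s ∩ v) = ∑ p ∈ goodPatts J s, Q (cylSet J (extp J p) ∩ v) := by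
  have hseteq : s ∩ v ∩ Gset = ⋃ p ∈ goodPatts J s, (cylSet J (extp J p) ∩ v ∩ Gset) := by
    ext w
    simp only [Set.mem_iUnion, Set.mem_inter_iff, exists_prop]
    constructor
    · rintro ⟨⟨hws, hwv⟩, hwG⟩
      refine ⟨fun j _ => w j, ?_, ⟨fun j hj => ?_, hwv⟩, hwG⟩
      · rw [mem_goodPatts]
        constructor
        · rw [Finset.mem_pi]; intro j hj
          simp only [Finset.mem_insert, Finset.mem_singleton]; exact hwG j
        · exact (hdep w _ (fun j hj => by rw [extp, dif_pos hj])).1 hws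
      · rw [extp, dif_pos hj]
    · rintro ⟨p, hp, ⟨hwc, hwv⟩, hwG⟩
      rw [mem_goodPatts] at hp
      refine ⟨⟨?_, hwv⟩, hwG⟩
      exact (hdep (extp J p) w (fun j hj => (hwc j hj).symm)).1 hp.2
  have h1 : Q (s ∩ v) = Q (s ∩ v ∩ Gset) := (isBer_inter_G hB _).symm
  rw [h1, hseteq, measure_biUnion_finset ?disj ?meas]
  · apply Finset.sum_congr rfl
    intro p _
    exact isBer_inter_G hB _
  case disj =>
    intro p hp q hq hpq
    simp only [Function.onFun]
    rw [Set.disjoint_left]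
    rintro w ⟨⟨hw1, -⟩, -⟩ ⟨⟨hw2, -⟩, -⟩
    apply hpq
    funext j hj
    have e1 := hw1 j hj; have e2 := hw2 j hj
    rw [extp, dif_pos hj] at e1 e2
    rw [← e1, ← e2]
  case meas =>
    intro p _
    exact ((measurableSet_cyl _ _).inter hv).inter measurableSet_G

lemma patt_card {Q : Measure (ℤ → ℤ)} (hB : IsBer Q) {s : Set (ℤ → ℤ)} {J : Finset ℤ}
    (hdep : DepOn s J) :
    Q s = (goodPatts J s).card * (1 / 2 : ENNReal) ^ J.card := by
  have := decomp hB hdep (v := Set.univ) MeasurableSet.univ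
  rw [Set.inter_univ] at this
  rw [this]
  have : ∀ p ∈ goodPatts J s, Q (cylSet J (extp J p) ∩ Set.univ) = (1 / 2 : ENNReal) ^ J.card := by
    intro p hp
    rw [Set.inter_univ]
    apply hB.2.2
    apply extp_mem_patts
    rw [mem_goodPatts] at hp
    exact hp.1
  rw [Finset.sum_congr rfl this, Finset.sum_const, nsmul_eq_mul]

lemma cyl_inter_cyl {J J' : Finset ℤ} (hdisj : Disjoint J J') (a b : ℤ → ℤ) :
    cylSet J a ∩ cylSet J' b = cylSet (J ∪ J') (fun j => if j ∈ J then a j else b j) := by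
  ext w
  simp only [Set.mem_inter_iff, cylSet, Set.mem_setOf_eq, Finset.mem_union]
  constructor
  · rintro ⟨h1, h2⟩ j hj
    by_cases hjJ : j ∈ J
    · rw [if_pos hjJ]; exact h1 j hjJ
    · rw [if_neg hjJ]; rcases hj with h | h; · exact absurd h hjJ
      exact h2 j h
  · intro h
    refine ⟨fun j hj => ?_, fun j hj => ?_⟩
    · have := h j (Or.inl hj); rwa [if_pos hj] at this
    · have := h j (Or.inr hj)
      rwa [if_neg (Finset.disjoint_right.1 hdisj hj)] at this

lemma prod_rule {Q : Measure (ℤ → ℤ)} (hB : IsBer Q) {s t : Set (ℤ → ℤ)} {J J' : Finset ℤ}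
    (hdeps : DepOn s J) (hdept : DepOn t J') (hdisj : Disjoint J J') (ht : MeasurableSet t) :
    Q (s ∩ t) = Q s * Q t := by
  rw [decomp hB hdeps ht]
  have hterm : ∀ p ∈ goodPatts J s, Q (cylSet J (extp J p) ∩ t) =
      (goodPatts J' t).card * (1 / 2 : ENNReal) ^ (J.card + J'.card) := by
    intro p hp
    rw [Set.inter_comm, decomp hB hdept (measurableSet_cyl J (extp J p))]
    have : ∀ q ∈ goodPatts J' t, Q (cylSet J' (extp J' q) ∩ cylSet J (extp J p)) =
        (1 / 2 : ENNReal) ^ (J.card + J'.card) := by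
      intro q hq
      rw [Set.inter_comm, cyl_inter_cyl hdisj]
      rw [mem_goodPatts] at hp hq
      have := hB.2.2 (J ∪ J') (fun j => if j ∈ J then extp J p j else extp J' q j) ?_
      · rw [this, Finset.card_union_of_disjoint hdisj]
      · intro j hj
        rw [Finset.mem_union] at hj
        beta_reduce
        by_cases hjJ : j ∈ J
        · rw [if_pos hjJ]; exact extp_mem_patts hp.1 j hjJ
        · rw [if_neg hjJ]
          rcases hj with h | h; · exact absurd h hjJ
          exact extp_mem_patts hq.1 j h
    rw [Finset.sum_congr rfl this, Finset.sum_const, nsmul_eq_mul]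
  rw [Finset.sum_congr rfl hterm, Finset.sum_const, nsmul_eq_mul,
    patt_card hB hdeps, patt_card hB hdept, pow_add]
  ring

lemma isBer_unique {Q Q' : Measure (ℤ → ℤ)} (hB : IsBer Q) (hB' : IsBer Q') : Q = Q' := by
  haveI := hB.1; haveI := hB'.1
  apply ext_of_generate_finite cylFam pi_eq_generateFrom_cyl isPiSystem_cyl
  · rintro s ⟨F, a, rfl⟩
    by_cases h : ∀ j ∈ F, a j = 1 ∨ a j = -1
    · rw [hB.2.2 F a h, hB'.2.2 F a h]
    · push_neg at h
      obtain ⟨j₀, hj₀, hj₀'⟩ := h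
      have hsub : cylSet F a ⊆ Gsetᶜ := by
        intro w hw hG
        have hwj := hw j₀ hj₀
        rcases hG j₀ with h | h <;> rw [hwj] at h <;> exact absurd h (by tauto)
      have h1 : Q (cylSet F a) = 0 := le_antisymm
        (le_trans (measure_mono hsub) (le_of_eq (isBer_G_compl hB))) (zero_le)
      have h2 : Q' (cylSet F a) = 0 := le_antisymm
        (le_trans (measure_mono hsub) (le_of_eq (isBer_G_compl hB'))) (zero_le)
      rw [h1, h2]
  · simp [measure_univ]

lemma isBer_map {Q : Measure (ℤ → ℤ)} (hB : IsBer Q) {f : (ℤ → ℤ) → (ℤ → ℤ)}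
    (hf : Measurable f) (hG : Gset ⊆ f ⁻¹' Gset)
    (hcyl : ∀ (F : Finset ℤ) (a : ℤ → ℤ), (∀ j ∈ F, a j = 1 ∨ a j = -1) →
      ∃ (F' : Finset ℤ) (a' : ℤ → ℤ), (∀ j ∈ F', a' j = 1 ∨ a' j = -1) ∧ F'.card = F.card ∧
        f ⁻¹' (cylSet F a) = cylSet F' a') :
    MeasurePreserving f Q Q := by
  haveI := hB.1
  have hBmap : IsBer (Q.map f) := by
    refine ⟨Measure.isProbabilityMeasure_map hf.aemeasurable, ?_, ?_⟩
    · rw [Measure.map_apply hf measurableSet_G]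
      refine le_antisymm (prob_le_one) ?_
      calc (1 : ENNReal) = Q Gset := hB.2.1.symm
        _ ≤ Q (f ⁻¹' Gset) := measure_mono hG
    · intro F a ha
      obtain ⟨F', a', ha', hcard, hpre⟩ := hcyl F a ha
      rw [Measure.map_apply hf (measurableSet_cyl F a), hpre, hB.2.2 F' a' ha', hcard]
  exact ⟨hf, isBer_unique hBmap hB⟩

lemma measurable_flipF (S : Finset ℤ) : Measurable (flipF S) := by
  apply measurable_pi_iff.2; intro j
  by_cases h : j ∈ S <;> simp only [flipF, h, if_true, if_false]
  · exact (measurable_pi_apply j).neg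
  · exact measurable_pi_apply j

lemma flip_preserving {Q : Measure (ℤ → ℤ)} (hB : IsBer Q) (S : Finset ℤ) :
    MeasurePreserving (flipF S) Q Q := by
  apply isBer_map hB (measurable_flipF S)
  · intro w hw j
    simp only [flipF]
    by_cases h : j ∈ S <;> simp only [h, if_true, if_false]
    · rcases hw j with h' | h' <;> simp [h']
    · exact hw j
  · intro F a ha
    refine ⟨F, fun j => if j ∈ S then -a j else a j, ?_, rfl, ?_⟩
    · intro j hj
      by_cases h : j ∈ S <;> simp only [h, if_true, if_false]
      · rcases ha j hj with h' | h' <;> simp [h']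
      · exact ha j hj
    · ext w
      simp only [Set.mem_preimage, cylSet, Set.mem_setOf_eq, flipF]
      constructor
      · intro h j hj
        have := h j hj
        by_cases hS : j ∈ S <;> simp only [hS, if_true, if_false] at this ⊢ <;> omega
      · intro h j hj
        have := h j hj
        by_cases hS : j ∈ S <;> simp only [hS, if_true, if_false] at this ⊢ <;> omega

lemma neg_preserving {Q : Measure (ℤ → ℤ)} (hB : IsBer Q) :
    MeasurePreserving (fun w : ℤ → ℤ => -w) Q Q := by
  apply isBer_map hB (by apply measurable_pi_iff.2; intro j; exact (measurable_pi_apply j).neg)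
  · intro w hw j
    simp only [Set.mem_preimage, Pi.neg_apply]
    rcases hw j with h' | h' <;> [right; left] <;> simp [Gset] at * <;> omega
  · intro F a ha
    refine ⟨F, -a, ?_, rfl, ?_⟩
    · intro j hj; rcases ha j hj with h' | h' <;> simp [h']
    · ext w
      simp only [Set.mem_preimage, cylSet, Set.mem_setOf_eq, Pi.neg_apply]
      constructor <;> intro h j hj <;> have := h j hj <;> omega

lemma measurable_shiftBy {B : Type*} [MeasurableSpace B] (m : ℤ) :
    Measurable (shiftBy (A := B) m) := by
  apply measurable_pi_iff.2; intro k; exact measurable_pi_apply _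

lemma shift_preserving {Q : Measure (ℤ → ℤ)} (hB : IsBer Q) (m : ℤ) :
    MeasurePreserving (shiftBy m) Q Q := by
  apply isBer_map hB (measurable_shiftBy m)
  · intro w hw j
    exact hw (j + m)
  · intro F a ha
    refine ⟨F.image (· + m), fun k => a (k - m), ?_, Finset.card_image_of_injective _ (add_left_injective m), ?_⟩
    · intro j hj
      rw [Finset.mem_image] at hj
      obtain ⟨k, hk, rfl⟩ := hj
      simpa using ha k hk
    · ext w
      simp only [Set.mem_preimage, cylSet, Set.mem_setOf_eq, shiftBy, Finset.mem_image]
      constructor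
      · rintro h j ⟨k, hk, rfl⟩
        simpa using h k hk
      · intro h j hj
        have := h (j + m) ⟨j, hj, rfl⟩
        simpa using this




lemma measurable_walk (n : ℤ) : Measurable (fun w => walk w n) := by
  unfold walk
  rcases le_or_gt 0 n with h | h
  · simp only [if_pos h]
    exact Finset.measurable_sum _ (fun j _ => measurable_eval j)
  · simp only [if_neg (not_le.2 h)]
    exact (Finset.measurable_sum _ (fun j _ => measurable_eval j)).neg

def EA : Set (ℤ → ℤ) := {w | (∀ j, w j = 1 ∨ w j = -1) ∧ ∃ K : ℤ, ∀ n : ℕ, walk w (n : ℤ) ≤ K}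
def EB : Set (ℤ → ℤ) := {w | (∀ j, w j = 1 ∨ w j = -1) ∧ ∃ K : ℤ, ∀ n : ℕ, K ≤ walk w (n : ℤ)}

lemma measurableSet_EA : MeasurableSet EA := by
  have : EA = Gset ∩ ⋃ K : ℤ, ⋂ n : ℕ, {w | walk w (n : ℤ) ≤ K} := by
    ext w
    simp only [EA, Set.mem_inter_iff, Set.mem_iUnion, Set.mem_iInter, Set.mem_setOf_eq, Gset]
  rw [this]
  exact measurableSet_G.inter (MeasurableSet.iUnion fun K => MeasurableSet.iInter fun n =>
    measurable_walk _ (by trivial : MeasurableSet (Set.Iic K)))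

lemma measurableSet_EB : MeasurableSet EB := by
  have : EB = Gset ∩ ⋃ K : ℤ, ⋂ n : ℕ, {w | K ≤ walk w (n : ℤ)} := by
    ext w
    simp only [EB, Set.mem_inter_iff, Set.mem_iUnion, Set.mem_iInter, Set.mem_setOf_eq, Gset]
  rw [this]
  exact measurableSet_G.inter (MeasurableSet.iUnion fun K => MeasurableSet.iInter fun n =>
    measurable_walk _ (by trivial : MeasurableSet (Set.Ici K)))

lemma walk_shift (w : ℤ → ℤ) (m : ℕ) (n : ℤ) (hn : 0 ≤ n) :
    walk (shiftBy (m : ℤ) w) n = walk w (n + m) - walk w (m : ℤ) := by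
  have h1 : walk (shiftBy (m : ℤ) w) n - walk (shiftBy (m : ℤ) w) 0
      = ∑ j ∈ Finset.Ico (0 : ℤ) n, w (j + m) := walk_sub _ hn
  rw [walk_zero, sub_zero] at h1
  have h2 : walk w (n + m) - walk w (m : ℤ) = ∑ j ∈ Finset.Ico (m : ℤ) (n + m), w j :=
    walk_sub w (by omega)
  have h3 : ∑ j ∈ Finset.Ico (0 : ℤ) n, w (j + m) = ∑ j ∈ Finset.Ico (m : ℤ) (n + m), w j := by
    rw [show Finset.Ico (m : ℤ) (n + m) = (Finset.Ico (0 : ℤ) n).map (addRightEmbedding (m : ℤ))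
      by rw [Finset.map_add_right_Ico]; congr 1; omega]
    rw [Finset.sum_map]
    rfl
  rw [h1, h2, h3]

lemma EA_shift_invariant (m : ℕ) : shiftBy (m : ℤ) ⁻¹' EA = EA := by
  ext w
  simp only [Set.mem_preimage, EA, Set.mem_setOf_eq]
  constructor
  · rintro ⟨h1, K, hK⟩
    have h1' : ∀ j, w j = 1 ∨ w j = -1 := by
      intro j
      have := h1 (j - m)
      simpa [shiftBy, sub_add_cancel] using this
    refine ⟨h1', max (K + walk w (m : ℤ)) (m : ℤ), fun n => ?_⟩
    rcases le_or_gt (m : ℕ) n with h | h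
    · have hh := hK (n - m)
      rw [walk_shift w m _ (by positivity)] at hh
      have : ((n - m : ℕ) : ℤ) + m = (n : ℤ) := by push_cast; omega
      rw [this] at hh
      have := le_max_left (K + walk w (m : ℤ)) (m : ℤ)
      omega
    · have hb := walk_bound h1' (by exact_mod_cast Nat.zero_le n : (0 : ℤ) ≤ (n : ℤ))
      rw [walk_zero, sub_zero] at hb
      obtain ⟨hb1, hb2⟩ := abs_le.1 hb
      have := le_max_right (K + walk w (m : ℤ)) (m : ℤ)
      have hnm : (n : ℤ) ≤ (m : ℤ) := by exact_mod_cast h.le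
      omega
  · rintro ⟨h1, K, hK⟩
    refine ⟨fun j => h1 (j + m), K - walk w (m : ℤ), fun n => ?_⟩
    rw [walk_shift w m _ (by positivity)]
    have := hK ((n + m : ℕ))
    have hc : (((n + m : ℕ) : ℕ) : ℤ) = (n : ℤ) + m := by push_cast; ring
    rw [hc] at this
    omega

lemma walk_neg (w : ℤ → ℤ) (n : ℤ) : walk (-w) n = -walk w n := by
  unfold walk
  split <;> simp

lemma neg_preimage_EA : (fun w : ℤ → ℤ => -w) ⁻¹' EA = EB := by
  ext w
  simp only [Set.mem_preimage, EA, EB, Set.mem_setOf_eq, Pi.neg_apply, walk_neg]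
  constructor
  · rintro ⟨h1, K, hK⟩
    exact ⟨fun j => by have := h1 j; omega, -K, fun n => by have := hK n; omega⟩
  · rintro ⟨h1, K, hK⟩
    exact ⟨fun j => by have := h1 j; omega, -K, fun n => by have := hK n; omega⟩

lemma depOn_mono {s : Set (ℤ → ℤ)} {J J' : Finset ℤ} (h : DepOn s J) (hJJ : J ⊆ J') :
    DepOn s J' := fun w w' hw => h w w' (fun j hj => hw j (hJJ hj))

lemma depOn_cyl (F : Finset ℤ) (a : ℤ → ℤ) : DepOn (cylSet F a) F := by
  intro w w' hw
  constructor <;> intro h j hj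
  · rw [← hw j hj]; exact h j hj
  · rw [hw j hj]; exact h j hj

lemma window_of_algebra {B : Set (ℤ → ℤ)} (hB : B ∈ generateSetAlgebra cylFam) :
    ∃ J, DepOn B J := by
  induction hB with
  | base s hs =>
    obtain ⟨F, a, rfl⟩ := hs
    exact ⟨F, depOn_cyl F a⟩
  | empty => exact ⟨∅, fun _ _ _ => Iff.rfl⟩
  | compl s hs ih =>
    obtain ⟨J, hJ⟩ := ih
    exact ⟨J, fun w w' hw => not_congr (hJ w w' hw)⟩
  | union s t hs ht ihs iht =>
    obtain ⟨J, hJ⟩ := ihs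
    obtain ⟨J', hJ'⟩ := iht
    refine ⟨J ∪ J', fun w w' hw => or_congr ?_ ?_⟩
    · exact hJ w w' (fun j hj => hw j (Finset.mem_union_left _ hj))
    · exact hJ' w w' (fun j hj => hw j (Finset.mem_union_right _ hj))

lemma algebra_measurable {B : Set (ℤ → ℤ)} (hB : B ∈ generateSetAlgebra cylFam) :
    MeasurableSet B := by
  have h : MeasurableSet[MeasurableSpace.generateFrom (generateSetAlgebra cylFam)] B :=
    MeasurableSpace.measurableSet_generateFrom hB
  rwa [generateFrom_generateSetAlgebra_eq, ← pi_eq_generateFrom_cyl] at h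

lemma abs_toReal_diff_le {Q : Measure (ℤ → ℤ)} [IsProbabilityMeasure Q] (s t : Set (ℤ → ℤ)) :
    |(Q s).toReal - (Q t).toReal| ≤ (Q (symmDiff s t)).toReal := by
  have key : ∀ u v : Set (ℤ → ℤ), Q u ≤ Q v + Q (symmDiff u v) := by
    intro u v
    refine le_trans (measure_mono ?_) (measure_union_le _ _)
    intro x hx
    by_cases h : x ∈ v
    · exact Or.inl h
    · exact Or.inr (Set.mem_symmDiff.2 (Or.inl ⟨hx, h⟩))
  have h1 := key s t
  have h2 := key t s
  rw [symmDiff_comm] at h2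
  have f1 : (Q s).toReal ≤ (Q t).toReal + (Q (symmDiff s t)).toReal := by
    have := ENNReal.toReal_mono (by finiteness) h1
    rwa [ENNReal.toReal_add (by finiteness) (by finiteness)] at this
  have f2 : (Q t).toReal ≤ (Q s).toReal + (Q (symmDiff s t)).toReal := by
    have := ENNReal.toReal_mono (by finiteness) h2
    rwa [ENNReal.toReal_add (by finiteness) (by finiteness)] at this
  rw [abs_le]; constructor <;> linarith

lemma symmDiff_inter_subset (a b c d : Set (ℤ → ℤ)) :
    symmDiff (a ∩ b) (c ∩ d) ⊆ symmDiff a c ∪ symmDiff b d := by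
  intro x hx
  rw [Set.mem_symmDiff] at hx
  simp only [Set.mem_union, Set.mem_symmDiff, Set.mem_inter_iff] at *
  tauto

lemma zero_or_one {Q : Measure (ℤ → ℤ)} (hB : IsBer Q) {E : Set (ℤ → ℤ)}
    (hE : MeasurableSet E) (hinv : ∀ m : ℕ, shiftBy (m : ℤ) ⁻¹' E = E) :
    Q E = 0 ∨ Q E = 1 := by
  haveI := hB.1
  have key : ∀ ε : ℝ, 0 < ε → |(Q E).toReal - (Q E).toReal ^ 2| ≤ 4 * ε := by
    intro ε hε
    have MD : Q.MeasureDense (generateSetAlgebra cylFam) :=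
      Measure.MeasureDense.of_generateFrom_isSetAlgebra_finite Q isSetAlgebra_generateSetAlgebra
        (by rw [generateFrom_generateSetAlgebra_eq]; exact pi_eq_generateFrom_cyl)
    obtain ⟨B, hBmem, hBapp⟩ := MD.approx E hE (measure_ne_top Q E) ε hε
    have hBmeas : MeasurableSet B := algebra_measurable hBmem
    obtain ⟨J, hJ⟩ := window_of_algebra hBmem
    set m : ℕ := 2 * (J.sup (fun j => j.natAbs)) + 1 with hm
    have hdisj : Disjoint J (J.image (· + (m : ℤ))) := by
      rw [Finset.disjoint_right]
      rintro j hj hj'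
      rw [Finset.mem_image] at hj
      obtain ⟨k, hk, rfl⟩ := hj
      have e1 : k.natAbs ≤ J.sup (fun j => j.natAbs) := Finset.le_sup hk
      have e2 : (k + (m : ℤ)).natAbs ≤ J.sup (fun j => j.natAbs) := Finset.le_sup hj'
      omega
    have hpres := shift_preserving hB (m : ℤ)
    set B' := shiftBy (m : ℤ) ⁻¹' B with hB'
    have hB'meas : MeasurableSet B' := hpres.measurable hBmeas
    have hdep' : DepOn B' (J.image (· + (m : ℤ))) := by
      intro w w' hw
      exact hJ (shiftBy (m : ℤ) w) (shiftBy (m : ℤ) w')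
        (fun j hj => hw (j + m) (Finset.mem_image.2 ⟨j, hj, rfl⟩))
    have hprod : Q (B ∩ B') = Q B * Q B' :=
      prod_rule hB hJ hdep' hdisj hB'meas
    have hQB' : Q B' = Q B := hpres.measure_preimage hBmeas.nullMeasurableSet
    have hsymm' : Q (symmDiff E B') = Q (symmDiff E B) := by
      have e1 : symmDiff E B' = shiftBy (m : ℤ) ⁻¹' (symmDiff E B) := by
        rw [Set.preimage_symmDiff, hinv m]
      rw [e1, hpres.measure_preimage]
      exact (hE.symmDiff hBmeas).nullMeasurableSet
    have hEE : Q (E ∩ E) = Q E := by rw [Set.inter_self]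
    -- real numbers
    set e := (Q E).toReal
    set b := (Q B).toReal
    set d := (Q (symmDiff E B)).toReal
    have hd : d ≤ ε := by
      have := ENNReal.toReal_mono ENNReal.ofReal_ne_top hBapp.le
      rwa [ENNReal.toReal_ofReal hε.le] at this
    have f1 : |e - b| ≤ d := abs_toReal_diff_le E B
    have f2 : |e - b * b| ≤ 2 * d := by
      have h2 : Q (symmDiff (E ∩ E) (B ∩ B')) ≤ Q (symmDiff E B) + Q (symmDiff E B') :=
        le_trans (measure_mono (symmDiff_inter_subset E E B B')) (measure_union_le _ _)
      have h3 := abs_toReal_diff_le (Q := Q) (E ∩ E) (B ∩ B')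
      rw [hEE, hprod, hQB'] at h3
      have h4 : (Q (symmDiff (E ∩ E) (B ∩ B'))).toReal ≤ d + d := by
        have := ENNReal.toReal_mono (by finiteness) h2
        rwa [ENNReal.toReal_add (by finiteness) (by finiteness), hsymm'] at this
      rw [ENNReal.toReal_mul] at h3
      linarith
    have he1 : e ≤ 1 := by
      have := prob_le_one (μ := Q) (s := E)
      exact (ENNReal.toReal_le_toReal (by finiteness) (by simp)).2 this |>.trans (by simp)
    have hb1 : b ≤ 1 := by
      have := prob_le_one (μ := Q) (s := B)
      exact (ENNReal.toReal_le_toReal (by finiteness) (by simp)).2 this |>.trans (by simp)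
    have he0 : 0 ≤ e := ENNReal.toReal_nonneg
    have hb0 : 0 ≤ b := ENNReal.toReal_nonneg
    have f3 : |b * b - e * e| ≤ 2 * d := by
      have : b * b - e * e = (b - e) * (b + e) := by ring
      rw [this, abs_mul]
      have h5 : |b - e| ≤ d := by rw [abs_sub_comm]; exact f1
      have h6 : |b + e| ≤ 2 := by rw [abs_le]; constructor <;> linarith
      have hd0 : 0 ≤ d := ENNReal.toReal_nonneg
      calc |b - e| * |b + e| ≤ d * 2 := by
            exact mul_le_mul h5 h6 (abs_nonneg _) hd0
        _ = 2 * d := by ring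
    calc |e - e ^ 2| = |(e - b * b) + (b * b - e * e)| := by ring_nf
      _ ≤ |e - b * b| + |b * b - e * e| := abs_add_le _ _
      _ ≤ 2 * d + 2 * d := by linarith
      _ ≤ 4 * ε := by linarith
  -- conclude
  have hzero : |(Q E).toReal - (Q E).toReal ^ 2| = 0 := by
    by_contra h
    have hpos : 0 < |(Q E).toReal - (Q E).toReal ^ 2| :=
      lt_of_le_of_ne (abs_nonneg _) (Ne.symm h)
    have := key (|(Q E).toReal - (Q E).toReal ^ 2| / 8) (by positivity)
    linarith
  rw [abs_eq_zero, sub_eq_zero] at hzero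
  have : (Q E).toReal * ((Q E).toReal - 1) = 0 := by nlinarith [hzero]
  rcases mul_eq_zero.1 this with h | h
  · left
    have := ENNReal.toReal_eq_zero_iff (Q E)
    rcases this.1 h with h' | h'
    · exact h'
    · exact absurd h' (by finiteness)
  · right
    have h1 : (Q E).toReal = 1 := by linarith
    have : Q E = ENNReal.ofReal 1 := by
      rw [← h1, ENNReal.ofReal_toReal (by finiteness)]
    simpa using this

lemma bdd_zero {Q : Measure (ℤ → ℤ)} (hB : IsBer Q) (K : ℕ) :
    Q {w | (∀ j, w j = 1 ∨ w j = -1) ∧ ∀ n : ℕ, |walk w (n : ℤ)| ≤ (K : ℤ)} = 0 := by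
  haveI := hB.1
  set L : ℕ := 2 * K + 2 with hL
  set S := {w : ℤ → ℤ | (∀ j, w j = 1 ∨ w j = -1) ∧ ∀ n : ℕ, |walk w (n : ℤ)| ≤ (K : ℤ)} with hS
  set Blk : ℕ → Set (ℤ → ℤ) :=
    fun i => cylSet (Finset.Ico ((i : ℤ) * L) ((i : ℤ) * L + L)) (fun _ => 1) with hBlk
  have hBlkQ : ∀ i, Q (Blk i) = (1 / 2 : ENNReal) ^ L := by
    intro i
    rw [hB.2.2 _ _ (fun j _ => Or.inl rfl)]
    congr 1
    rw [Int.card_Ico]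
    omega
  have hBlkdep : ∀ i, DepOn (Blk i)ᶜ (Finset.Ico ((i : ℤ) * L) ((i : ℤ) * L + L)) :=
    fun i w w' hw => not_congr (depOn_cyl _ _ w w' hw)
  have hQint : ∀ M : ℕ, Q (⋂ i ∈ Finset.range M, (Blk i)ᶜ) = (1 - (1 / 2 : ENNReal) ^ L) ^ M := by
    intro M
    induction M with
    | zero => simp
    | succ M ih =>
      have hsplit : (⋂ i ∈ Finset.range (M + 1), (Blk i)ᶜ)
          = (⋂ i ∈ Finset.range M, (Blk i)ᶜ) ∩ (Blk M)ᶜ := by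
        rw [Finset.range_add_one, Finset.set_biInter_insert, Set.inter_comm]
      have hdepbig : DepOn (⋂ i ∈ Finset.range M, (Blk i)ᶜ) (Finset.Ico (0 : ℤ) ((M : ℤ) * L)) := by
        intro w w' hw
        simp only [Set.mem_iInter]
        refine forall_congr' fun i => forall_congr' fun hi => ?_
        rw [Finset.mem_range] at hi
        refine hBlkdep i w w' (fun j hj => hw j ?_)
        rw [Finset.mem_Ico] at hj ⊢
        have h1 : (0 : ℤ) ≤ (i : ℤ) * L := by positivity
        have h2 : (i : ℤ) * L + L ≤ (M : ℤ) * L := by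
          have : (i : ℤ) + 1 ≤ (M : ℤ) := by exact_mod_cast hi
          nlinarith
        omega
      have hdisj : Disjoint (Finset.Ico (0 : ℤ) ((M : ℤ) * L))
          (Finset.Ico ((M : ℤ) * L) ((M : ℤ) * L + L)) := by
        rw [Finset.disjoint_left]
        intro j hj hj'
        rw [Finset.mem_Ico] at hj hj'
        omega
      rw [hsplit, prod_rule hB hdepbig (hBlkdep M) hdisj (measurableSet_cyl _ _).compl, ih,
        prob_compl_eq_one_sub (measurableSet_cyl _ _), hBlkQ M]
      ring
  have hsub : ∀ M : ℕ, S ⊆ ⋂ i ∈ Finset.range M, (Blk i)ᶜ := by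
    intro M w hw
    simp only [Set.mem_iInter]
    intro i _
    intro hblk
    have hsum : walk w ((i : ℤ) * L + L) - walk w ((i : ℤ) * L) = L := by
      rw [walk_sub w (by omega : (i : ℤ) * L ≤ (i : ℤ) * L + L)]
      have : ∀ j ∈ Finset.Ico ((i : ℤ) * L) ((i : ℤ) * L + L), w j = 1 := hblk
      rw [Finset.sum_congr rfl this, Finset.sum_const, Int.card_Ico, nsmul_eq_mul, mul_one]
      omega
    have h0 : (0 : ℤ) ≤ (i : ℤ) * L := by positivity
    have e1 := hw.2 ((i : ℤ) * L).toNat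
    have e2 := hw.2 ((i : ℤ) * L + L).toNat
    rw [Int.toNat_of_nonneg h0] at e1
    rw [Int.toNat_of_nonneg (by omega)] at e2
    obtain ⟨e1a, e1b⟩ := abs_le.1 e1
    obtain ⟨e2a, e2b⟩ := abs_le.1 e2
    omega
  have hle : ∀ M : ℕ, Q S ≤ (1 - (1 / 2 : ENNReal) ^ L) ^ M :=
    fun M => (measure_mono (hsub M)).trans_eq (hQint M)
  have hlt1 : (1 - (1 / 2 : ENNReal) ^ L) < 1 := by
    apply ENNReal.sub_lt_self ENNReal.one_ne_top one_ne_zero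
    exact pow_ne_zero _ (by norm_num)
  have htend := ENNReal.tendsto_pow_atTop_nhds_zero_of_lt_one hlt1
  have : Q S ≤ 0 := ge_of_tendsto htend (Filter.Eventually.of_forall hle)
  exact le_antisymm this (zero_le)

lemma EA_inter_EB_zero {Q : Measure (ℤ → ℤ)} (hB : IsBer Q) : Q (EA ∩ EB) = 0 := by
  have hsub : EA ∩ EB ⊆ ⋃ K : ℕ,
      {w : ℤ → ℤ | (∀ j, w j = 1 ∨ w j = -1) ∧ ∀ n : ℕ, |walk w (n : ℤ)| ≤ (K : ℤ)} := by
    rintro w ⟨⟨h1, K₁, hK₁⟩, -, K₂, hK₂⟩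
    refine Set.mem_iUnion.2 ⟨(max K₁ (-K₂)).toNat, h1, fun n => ?_⟩
    have e1 := hK₁ n
    have e2 := hK₂ n
    rw [abs_le]
    constructor <;> omega
  refine le_antisymm (le_trans (measure_mono hsub) ?_) (zero_le)
  rw [measure_iUnion_null_iff.2 (fun K => bdd_zero hB K)]

lemma EA_EB_zero {Q : Measure (ℤ → ℤ)} (hB : IsBer Q) : Q EA = 0 ∧ Q EB = 0 := by
  haveI := hB.1
  have h1 := zero_or_one hB measurableSet_EA EA_shift_invariant
  have hEB : Q EB = Q EA := by
    rw [← neg_preimage_EA, (neg_preserving hB).measure_preimage measurableSet_EA.nullMeasurableSet]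
  rcases h1 with h | h
  · exact ⟨h, by rw [hEB, h]⟩
  · exfalso
    have hfull : Q (EA ∩ EB) = 1 := by
      have hc : Q (EA ∩ EB)ᶜ = 0 := by
        rw [Set.compl_inter]
        refine le_antisymm (le_trans (measure_union_le _ _) ?_) (zero_le)
        rw [prob_compl_eq_one_sub measurableSet_EA, prob_compl_eq_one_sub measurableSet_EB,
          h, hEB, h]
        simp
      have := prob_compl_eq_one_sub (μ := Q) (measurableSet_EA.inter measurableSet_EB)
      rw [hc] at this
      have h2 := prob_compl_eq_zero_iff (μ := Q) (measurableSet_EA.inter measurableSet_EB)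
      exact h2.1 hc
    rw [EA_inter_EB_zero hB] at hfull
    exact zero_ne_one hfull

def GoodW : Set (ℤ → ℤ) := {w | (∀ j, w j = 1 ∨ w j = -1) ∧ RecW w}

lemma measurableSet_GoodW : MeasurableSet GoodW := by
  have : GoodW = Gset ∩ ⋂ m : ℤ, ⋂ N : ℕ, ⋃ n : ℕ, ⋃ _ : N ≤ n,
      {w : ℤ → ℤ | walk w (n : ℤ) = m} := by
    ext w
    simp only [GoodW, Set.mem_inter_iff, Set.mem_iInter, Set.mem_iUnion, Set.mem_setOf_eq,
      Gset, RecW]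
    constructor
    · rintro ⟨h1, h2⟩
      exact ⟨h1, fun m N => by obtain ⟨n, hn1, hn2⟩ := h2 m N; exact ⟨n, hn1, hn2⟩⟩
    · rintro ⟨h1, h2⟩
      exact ⟨h1, fun m N => by obtain ⟨n, hn1, hn2⟩ := h2 m N; exact ⟨n, hn1, hn2⟩⟩
  rw [this]
  refine measurableSet_G.inter (MeasurableSet.iInter fun m => MeasurableSet.iInter fun N =>
    MeasurableSet.iUnion fun n => MeasurableSet.iUnion fun _ =>
      measurable_walk _ (by trivial : MeasurableSet ({m} : Set ℤ)))

lemma goodW_ae {Q : Measure (ℤ → ℤ)} (hB : IsBer Q) : Q GoodWᶜ = 0 := by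
  have hsub : GoodWᶜ ⊆ Gsetᶜ ∪ EA ∪ EB := by
    intro w hw
    by_contra h
    simp only [Set.mem_union, not_or] at h
    obtain ⟨⟨hG, hEA⟩, hEB⟩ := h
    rw [Set.notMem_compl_iff] at hG
    apply hw
    refine ⟨hG, recW_of_unbounded hG ?_ ?_⟩
    · intro K
      by_contra hc
      push_neg at hc
      exact hEA ⟨hG, K, fun n => (hc n).le⟩
    · intro K
      by_contra hc
      push_neg at hc
      exact hEB ⟨hG, K, fun n => (hc n).le⟩
  refine le_antisymm (le_trans (measure_mono hsub) ?_) (zero_le)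
  refine le_trans (measure_union_le _ _) ?_
  rw [(EA_EB_zero hB).2, add_zero]
  refine le_trans (measure_union_le _ _) ?_
  rw [isBer_G_compl hB, (EA_EB_zero hB).1, add_zero]


lemma measurable_pihat {B : Type*} [MeasurableSpace B] [Countable B]
    [MeasurableSingletonClass B] :
    Measurable (fun p : (ℤ → ℤ) × (ℤ → B) => kalikowPi p.1 p.2) := by
  rw [measurable_pi_iff]
  intro n
  apply Measurable.prod
  · exact (measurable_pi_apply n).comp measurable_fst
  · simp only [kalikowPi]
    apply measurable_to_countable'
    intro a
    have heq : (fun p : (ℤ → ℤ) × (ℤ → B) => p.2 (walk p.1 n)) ⁻¹' {a}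
        = ⋃ k : ℤ, ((fun w => walk w n) ∘ Prod.fst) ⁻¹' ({k} : Set ℤ)
          ∩ ((fun y : ℤ → B => y k) ∘ Prod.snd) ⁻¹' ({a} : Set B) := by
      ext p
      simp only [Set.mem_preimage, Set.mem_iUnion, Set.mem_inter_iff, Function.comp_apply,
        Set.mem_singleton_iff]
      constructor
      · intro h; exact ⟨walk p.1 n, rfl, h⟩
      · rintro ⟨k, hk, h⟩; rw [hk]; exact h
    rw [heq]
    refine MeasurableSet.iUnion fun k => MeasurableSet.inter ?_ ?_
    · exact ((measurable_walk n).comp measurable_fst) (MeasurableSet.singleton k)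
    · exact ((measurable_pi_apply k).comp measurable_snd) (MeasurableSet.singleton a)


theorem kalikow_skew_bernoulli_tail_invariant
    {A : Type} [Fintype A] [TopologicalSpace A] [DiscreteTopology A]
    [MeasurableSpace A] [DiscreteMeasurableSpace A]
    (X : Set (ℤ → A)) (hX : IsSubshift1 X)
    (ν : Measure (ℤ → A)) (hνP : IsProbabilityMeasure ν) (hνX : ν X = 1)
    (hνinv : ∀ n : ℤ, MeasurePreserving (shiftBy (A := A) n) ν ν)
    (hνna : ∀ x : ℤ → A, ν {x} = 0)
    (P : Measure (ℤ → ℤ)) (hPP : IsProbabilityMeasure P)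
    (hPsupp : P {w | ∀ j : ℤ, w j = 1 ∨ w j = -1} = 1)
    (hPcyl : ∀ (F : Finset ℤ) (a : ℤ → ℤ), (∀ j ∈ F, a j = 1 ∨ a j = -1) →
      P {w | ∀ j ∈ F, w j = a j} = (1 / 2 : ENNReal) ^ F.card) :
    IsTailInvariant1 ((P.prod ν).map fun p : (ℤ → ℤ) × (ℤ → A) => kalikowPi p.1 p.2)
      (gibbsRel1 (kalikowShift X)) := by
  classical
  haveI := hPP; haveI := hνP
  intro D g hD hgmeas hginj hgR A' hA'D hA'meas
  set π : (ℤ → ℤ) × (ℤ → A) → (ℤ → ℤ × A) := fun p => kalikowPi p.1 p.2 with hπdef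
  have hπ : Measurable π := measurable_pihat
  have hPBer : IsBer P := ⟨hPP, hPsupp, hPcyl⟩
  -- the countable family of corrections
  set T : Finset ℤ × ℤ → ((ℤ → ℤ) × (ℤ → A)) → ((ℤ → ℤ) × (ℤ → A)) :=
    fun t => Prod.map (flipF t.1) (shiftBy t.2) with hTdef
  have hTmeas : ∀ t, Measurable (T t) :=
    fun t => Measurable.prodMap (measurable_flipF t.1) (measurable_shiftBy t.2)
  have hTpres : ∀ t, MeasurePreserving (T t) (P.prod ν) (P.prod ν) :=
    fun t => (flip_preserving hPBer t.1).prod (hνinv t.2)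
  have hTinv1 : ∀ (t : Finset ℤ × ℤ) p, T (t.1, -t.2) (T t p) = p := by
    rintro ⟨S, c⟩ ⟨w, y⟩
    show (flipF S (flipF S w), shiftBy (-c) (shiftBy c y)) = (w, y)
    rw [flipF_flipF, shiftBy_shiftBy, neg_add_cancel, shiftBy_zero]
  have hTinv2 : ∀ (t : Finset ℤ × ℤ) p, T t (T (t.1, -t.2) p) = p := by
    rintro ⟨S, c⟩ ⟨w, y⟩
    show (flipF S (flipF S w), shiftBy c (shiftBy (-c) y)) = (w, y)
    rw [flipF_flipF, shiftBy_shiftBy, add_neg_cancel, shiftBy_zero]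
  -- the good set upstairs
  set Og : Set ((ℤ → ℤ) × (ℤ → A)) := Prod.fst ⁻¹' GoodW with hOgdef
  have hOgmeas : MeasurableSet Og := measurableSet_GoodW.preimage measurable_fst
  have hOgnull : (P.prod ν) Ogᶜ = 0 := by
    have he : Ogᶜ = GoodWᶜ ×ˢ (Set.univ : Set (ℤ → A)) := by
      ext p; simp [hOgdef, Set.mem_prod]
    rw [he, Measure.prod_prod, goodW_ae hPBer, zero_mul]
  have hTOg : ∀ t p, p ∈ Og → T t p ∈ Og := by
    rintro ⟨S, c⟩ ⟨w, y⟩ hp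
    have hp' : w ∈ GoodW := hp
    have h1 : ∀ j, flipF S w j = 1 ∨ flipF S w j = -1 := by
      intro j
      rcases hp'.1 j with h | h <;> by_cases hS : j ∈ S <;> simp [flipF, hS, h]
    have h2 : RecW (flipF S w) := by
      apply recW_of_finite_diff hp'.2
      apply (S.finite_toSet).subset
      intro j hj
      rw [Set.mem_setOf_eq] at hj
      by_contra hc
      apply hj
      simp only [flipF, if_neg (fun h => hc (Finset.mem_coe.2 h))]
    exact Set.mem_preimage.2 (⟨h1, h2⟩ : flipF S w ∈ GoodW)
  -- key pointwise claim
  have hkey : ∀ p ∈ Og, ∀ z' : ℤ → ℤ × A, z' ∈ kalikowShift X →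
      {k : ℤ | z' k ≠ π p k}.Finite → ∃ t, z' = π (T t p) := by
    rintro p hp z' ⟨w', hw', y', hy', rfl⟩ hfin
    have hp' : p.1 ∈ GoodW := hp
    obtain ⟨S, c, hSc⟩ := core_claim hp'.1 hp'.2 hw' hfin
    exact ⟨(S, c), hSc⟩
  -- injectivity of π on the good set
  have hπinj : ∀ p ∈ Og, ∀ q, π p = π q → p = q := by
    intro p hp q h
    have hp' : p.1 ∈ GoodW := hp
    obtain ⟨h1, h2⟩ := kalikow_inj hp'.2 h
    exact Prod.ext h1 h2
  -- measurable image
  have hgim : MeasurableSet (g '' A') := by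
    haveI : StandardBorelSpace ↥D := hD.standardBorel
    have h1 : MeasurableSet (Subtype.val ⁻¹' A' : Set ↥D) :=
      measurable_subtype_coe hA'meas
    have h2 : Set.InjOn (D.restrict g) (Subtype.val ⁻¹' A') :=
      fun a _ b _ hab => Subtype.ext (hginj a.2 b.2 hab)
    have him := h1.image_of_measurable_injOn hgmeas h2
    have he : g '' A' = (D.restrict g) '' (Subtype.val ⁻¹' A') := by
      ext x
      constructor
      · rintro ⟨a, ha, rfl⟩; exact ⟨⟨a, hA'D ha⟩, ha, rfl⟩
      · rintro ⟨a, ha, rfl⟩; exact ⟨↑a, ha, rfl⟩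
    rwa [he]
  -- sets upstairs
  set Ap : Set ((ℤ → ℤ) × (ℤ → A)) := π ⁻¹' A' with hApdef
  have hApmeas : MeasurableSet Ap := hπ hA'meas
  set Dpre : Set ((ℤ → ℤ) × (ℤ → A)) := π ⁻¹' D with hDpredef
  have hDpremeas : MeasurableSet Dpre := hπ hD
  have hApDpre : Ap ⊆ Dpre := fun p hp => hA'D hp
  -- the E sets
  set E : Finset ℤ × ℤ → Set ((ℤ → ℤ) × (ℤ → A)) :=
    fun t => (Og ∩ Ap) ∩ {p | π (T t p) = g (π p)} with hEdef
  have hEmeas : ∀ t, MeasurableSet (E t) := by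
    intro t
    have hu : Measurable (fun q : ↥Dpre => π (T t ↑q)) :=
      hπ.comp ((hTmeas t).comp measurable_subtype_coe)
    have hv : Measurable (fun q : ↥Dpre => g (π ↑q)) := by
      have : (fun q : ↥Dpre => g (π ↑q))
          = (D.restrict g) ∘ (fun q : ↥Dpre => (⟨π ↑q, q.2⟩ : ↥D)) := rfl
      rw [this]
      exact hgmeas.comp ((hπ.comp measurable_subtype_coe).subtype_mk)
    have heqset : MeasurableSet {q : ↥Dpre | π (T t ↑q) = g (π ↑q)} := by
      have he : {q : ↥Dpre | π (T t ↑q) = g (π ↑q)}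
          = ⋂ n : ℤ, {q : ↥Dpre | π (T t ↑q) n = g (π ↑q) n} := by
        ext q
        simp only [Set.mem_setOf_eq, Set.mem_iInter]
        exact ⟨fun h n => by rw [h], fun h => funext h⟩
      rw [he]
      exact MeasurableSet.iInter fun n =>
        measurableSet_eq_fun
          ((measurable_pi_apply n).comp hu) ((measurable_pi_apply n).comp hv)
    have hE : E t = Subtype.val ''
        ((Subtype.val ⁻¹' (Og ∩ Ap)) ∩ {q : ↥Dpre | π (T t ↑q) = g (π ↑q)}) := by
      ext p
      constructor
      · rintro ⟨hp1, hp2⟩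
        exact ⟨⟨p, hApDpre hp1.2⟩, ⟨hp1, hp2⟩, rfl⟩
      · rintro ⟨q, ⟨hq1, hq2⟩, rfl⟩
        exact ⟨hq1, hq2⟩
    rw [hE]
    exact MeasurableSet.subtype_image hDpremeas
      ((measurable_subtype_coe (hOgmeas.inter hApmeas)).inter heqset)
  -- disjointified version
  obtain ⟨f, hfsurj⟩ := exists_surjective_nat (Finset ℤ × ℤ)
  set E' : ℕ → Set ((ℤ → ℤ) × (ℤ → A)) :=
    fun n => E (f n) \ ⋃ (m : ℕ) (_ : m < n), E (f m) with hE'def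
  have hE'meas : ∀ n, MeasurableSet (E' n) :=
    fun n => (hEmeas (f n)).diff
      (MeasurableSet.iUnion fun m => MeasurableSet.iUnion fun _ => hEmeas (f m))
  have hE'sub : ∀ n, E' n ⊆ E (f n) := fun n => Set.diff_subset
  have hE'disj : Pairwise (Function.onFun Disjoint E') := by
    intro n m hnm
    rcases lt_or_gt_of_ne hnm with h | h
    · rw [Function.onFun, Set.disjoint_left]
      rintro p hp1 hp2
      exact hp2.2 (Set.mem_iUnion.2 ⟨n, Set.mem_iUnion.2 ⟨h, hp1.1⟩⟩)
    · rw [Function.onFun, Set.disjoint_left]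
      rintro p hp1 hp2
      exact hp1.2 (Set.mem_iUnion.2 ⟨m, Set.mem_iUnion.2 ⟨h, hp2.1⟩⟩)
  have hE'cover : Og ∩ Ap = ⋃ n, E' n := by
    apply Set.Subset.antisymm
    · intro p hp
      have hx : π p ∈ A' := hp.2
      have hgibbs := hgR (π p) (hA'D hx)
      have hfin : {k : ℤ | g (π p) k ≠ π p k}.Finite := by
        have hset : {k : ℤ | g (π p) k ≠ π p k} = {k : ℤ | π p k ≠ g (π p) k} := by
          ext k; exact ne_comm
        rw [hset]
        exact hgibbs.2.2
      have hex : ∃ n : ℕ, p ∈ E (f n) := by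
        obtain ⟨t, ht⟩ := hkey p hp.1 (g (π p)) hgibbs.2.1 hfin
        obtain ⟨n, rfl⟩ := hfsurj t
        exact ⟨n, hp, ht.symm⟩
      have hn₀ := Nat.find_spec hex
      refine Set.mem_iUnion.2 ⟨Nat.find hex, hn₀, ?_⟩
      simp only [Set.mem_iUnion, not_exists]
      intro m hm
      exact Nat.find_min hex hm
    · intro p hp
      obtain ⟨n, hn⟩ := Set.mem_iUnion.1 hp
      exact (hE'sub n hn).1
  -- the image sets
  set V : ℕ → Set ((ℤ → ℤ) × (ℤ → A)) :=
    fun n => T ((f n).1, -(f n).2) ⁻¹' E' n with hVdef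
  have hVmeas : ∀ n, MeasurableSet (V n) :=
    fun n => (hTmeas _) (hE'meas n)
  have hVsub : ∀ n, V n ⊆ π ⁻¹' (g '' A') := by
    intro n p hp
    set q := T ((f n).1, -(f n).2) p with hq
    have hqE : q ∈ E (f n) := hE'sub n hp
    have hπq : π q ∈ A' := hqE.1.2
    have hthis : π (T (f n) q) = g (π q) := hqE.2
    rw [hq, hTinv2 (f n) p] at hthis
    exact ⟨π q, hπq, hthis.symm⟩
  have hVcover : π ⁻¹' (g '' A') ∩ Og ⊆ ⋃ n, V n := by
    rintro p₁ ⟨hp₁im, hp₁Og⟩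
    obtain ⟨x, hxA', hgx⟩ := hp₁im
    have hxD := hA'D hxA'
    have hgibbs := hgR x hxD
    have hfin : {k : ℤ | x k ≠ π p₁ k}.Finite := by
      rw [← hgx]
      exact hgibbs.2.2
    obtain ⟨t₀, ht₀⟩ := hkey p₁ hp₁Og x hgibbs.1 hfin
    set q := T t₀ p₁ with hqdef
    have hqOg : q ∈ Og := hTOg t₀ p₁ hp₁Og
    have hqAp : q ∈ Ap := by rw [hApdef, Set.mem_preimage, ← ht₀]; exact hxA'
    have hqE' : q ∈ ⋃ n, E' n := hE'cover ▸ Set.mem_inter hqOg hqAp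
    obtain ⟨n, hn⟩ := Set.mem_iUnion.1 hqE'
    have hcond : π (T (f n) q) = g (π q) := (hE'sub n hn).2
    have : π (T (f n) q) = π p₁ := by
      rw [hcond, ← ht₀, hgx]
    have hTq : T (f n) q = p₁ :=
      hπinj (T (f n) q) (hTOg (f n) q hqOg) p₁ this
    refine Set.mem_iUnion.2 ⟨n, ?_⟩
    show T ((f n).1, -(f n).2) p₁ ∈ E' n
    have hback : T ((f n).1, -(f n).2) p₁ = q := by rw [← hTq, hTinv1 (f n) q]
    rw [hback]
    exact hn
  have hVdisj : Pairwise (Function.onFun Disjoint V) := by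
    intro n m hnm
    rw [Function.onFun, Set.disjoint_left]
    intro p hpn hpm
    set qn := T ((f n).1, -(f n).2) p with hqn
    set qm := T ((f m).1, -(f m).2) p with hqm
    have hqnE : qn ∈ E (f n) := hE'sub n hpn
    have hqmE : qm ∈ E (f m) := hE'sub m hpm
    have h1 : π p = g (π qn) := by
      have hh : π (T (f n) qn) = g (π qn) := hqnE.2
      rw [hqn, hTinv2 (f n) p] at hh; rw [← hh]
    have h2 : π p = g (π qm) := by
      have hh : π (T (f m) qm) = g (π qm) := hqmE.2
      rw [hqm, hTinv2 (f m) p] at hh; rw [← hh]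
    have hgg : g (π qn) = g (π qm) := by rw [← h1, ← h2]
    have hππ : π qn = π qm := hginj (hA'D hqnE.1.2) (hA'D hqmE.1.2) hgg
    have hqq : qn = qm := hπinj qn hqnE.1.1 qm hππ
    have : qn ∈ E' n ∩ E' m := ⟨hpn, hqq ▸ hpm⟩
    exact Set.disjoint_left.1 (hE'disj hnm) this.1 this.2
  -- measure computation
  have hVmeasure : ∀ n, (P.prod ν) (V n) = (P.prod ν) (E' n) :=
    fun n => (hTpres ((f n).1, -(f n).2)).measure_preimage (hE'meas n).nullMeasurableSet
  have hμA' : ((P.prod ν).map π) A' = ∑' n, (P.prod ν) (E' n) := by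
    rw [Measure.map_apply hπ hA'meas]
    have h1 : (P.prod ν) Ap = (P.prod ν) (Ap ∩ Og) := (measure_inter_conull hOgnull).symm
    rw [show (π ⁻¹' A') = Ap from rfl, h1, Set.inter_comm, hE'cover]
    exact measure_iUnion hE'disj hE'meas
  have hμgA' : ((P.prod ν).map π) (g '' A') = ∑' n, (P.prod ν) (E' n) := by
    rw [Measure.map_apply hπ hgim]
    have h1 : (P.prod ν) (π ⁻¹' (g '' A')) = (P.prod ν) (π ⁻¹' (g '' A') ∩ Og) :=
      (measure_inter_conull hOgnull).symm
    have h2 : (P.prod ν) (π ⁻¹' (g '' A') ∩ Og) = (P.prod ν) (⋃ n, V n) := by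
      apply le_antisymm (measure_mono hVcover)
      calc (P.prod ν) (⋃ n, V n) = (P.prod ν) ((⋃ n, V n) ∩ Og) :=
            (measure_inter_conull hOgnull).symm
        _ ≤ (P.prod ν) (π ⁻¹' (g '' A') ∩ Og) := by
            apply measure_mono
            exact Set.inter_subset_inter_left _ (Set.iUnion_subset hVsub)
    rw [h1, h2, measure_iUnion hVdisj hVmeas]
    exact tsum_congr hVmeasure
  rw [hμgA', hμA']

end PaperStmt
end
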